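/- arXiv:1107.0595 — 7 statements merged into one kernel-verified Lean document; each statement's English description precedes it below -/
import Mathlib

section
/- Let α₁, α₂, α₃ be holomorphic 1-forms on a domain in ℂ² with pairwise wedge products nowhere zero, satisfying α₁ + α₂ + α₃ = 0. Then there exists a unique holomorphic 1-form η such that dα_i = η ∧ α_i for every i ∈ {1,2,3}. -/
open Complex

/-- The partial derivative with respect to the first variable of a function on `ℂ × ℂ`. -/
noncomputable def pdx (f : ℂ × ℂ → ℂ) (p : ℂ × ℂ) : ℂ :=
  deriv (fun z => f (z, p.2)) p.1

/-- The partial derivative with respect to the second variable of a function on `ℂ × ℂ`. -/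
noncomputable def pdy (f : ℂ × ℂ → ℂ) (p : ℂ × ℂ) : ℂ :=
  deriv (fun z => f (p.1, z)) p.2

section helpers
open Metric Set Filter intervalIntegral Real Topology

lemma cauchy_bound {h : ℂ → ℂ} {V : Set ℂ} (hV : IsOpen V) (hd : DifferentiableOn ℂ h V)
    {c : ℂ} {R M : ℝ} (hR : 0 < R) (hc : closedBall c R ⊆ V)
    (hM : ∀ z ∈ sphere c R, ‖h z‖ ≤ M) {w : ℂ} (hw : dist w c ≤ R / 2) :
    ‖deriv h w‖ ≤ 4 * M / R := by
  have hw' : w ∈ ball c R := by rw [mem_ball]; linarith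
  have key := Complex.two_pi_I_inv_smul_circleIntegral_sub_sq_inv_smul_of_differentiable hV hc hd hw'
  have hM0 : 0 ≤ M := by
    refine le_trans (norm_nonneg (h (c + R))) (hM _ ?_)
    simp [Complex.dist_eq, abs_of_pos hR]
  rw [← key]
  have hbound := circleIntegral.norm_two_pi_i_inv_smul_integral_le_of_norm_le_const
    (f := fun z => ((z - w) ^ 2)⁻¹ • h z) (c := c) (R := R) (C := ((R/2)^2)⁻¹ * M) hR.le ?_
  · refine le_trans hbound (le_of_eq ?_)
    field_simp
    ring
  · intro z hz
    have hz' : dist z c = R := mem_sphere.mp hz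
    have hzw : R / 2 ≤ dist z w := by
      have := dist_triangle z w c
      linarith
    rw [norm_smul, norm_inv, norm_pow]
    have h1 : ‖z - w‖ = dist z w := by rw [Complex.dist_eq]
    rw [h1]
    apply mul_le_mul _ (hM z hz) (norm_nonneg _) (by positivity)
    apply inv_anti₀ (by positivity)
    apply pow_le_pow_left₀ (by positivity) hzw

lemma pdy_eq_integral {U : Set (ℂ × ℂ)} (hU : IsOpen U) {g : ℂ × ℂ → ℂ}
    (hg : DifferentiableOn ℂ g U) {z y : ℂ} {ρ : ℝ} (hρ : 0 < ρ)
    (hmem : ∀ w ∈ closedBall y ρ, (z, w) ∈ U) :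
    deriv (fun w => g (z, w)) y = (2 * (π:ℂ) * I)⁻¹ • ∮ w in C(y, ρ), ((w - y)^2)⁻¹ • g (z, w) := by
  have hV : IsOpen {w : ℂ | (z, w) ∈ U} := hU.preimage (by fun_prop)
  have hd : DifferentiableOn ℂ (fun w => g (z, w)) {w : ℂ | (z, w) ∈ U} := by
    intro w hw
    exact ((hg.differentiableAt (hU.mem_nhds hw)).comp w
      ((differentiableAt_const z).prodMk differentiableAt_id)).differentiableWithinAt
  exact (Complex.two_pi_I_inv_smul_circleIntegral_sub_sq_inv_smul_of_differentiable hV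
    (fun w hw => hmem w hw) hd (mem_ball_self hρ)).symm

lemma cont_pdy {U : Set (ℂ × ℂ)} (hU : IsOpen U) {g : ℂ × ℂ → ℂ} (hg : DifferentiableOn ℂ g U)
    {y : ℂ} {ρ : ℝ} (hρ : 0 < ρ) {γ : ℝ → ℂ} (hγ : Continuous γ)
    (hmem : ∀ θ, ∀ w ∈ closedBall y ρ, (γ θ, w) ∈ U) :
    Continuous fun θ => deriv (fun w => g (γ θ, w)) y := by
  have hrep : ∀ θ, deriv (fun w => g (γ θ, w)) y
      = (2 * (π:ℂ) * I)⁻¹ • ∮ w in C(y, ρ), ((w - y)^2)⁻¹ • g (γ θ, w) :=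
    fun θ => pdy_eq_integral hU hg hρ (hmem θ)
  simp only [hrep, circleIntegral]
  apply Continuous.fun_const_smul
  apply intervalIntegral.continuous_parametric_intervalIntegral_of_continuous'
  have hcg : Continuous fun q : ℝ × ℝ => g (γ q.1, circleMap y ρ q.2) := by
    apply hg.continuousOn.comp_continuous
    · exact (hγ.comp continuous_fst).prodMk ((continuous_circleMap y ρ).comp continuous_snd)
    · exact fun q => hmem q.1 _ (circleMap_mem_closedBall y hρ.le q.2)
  have hne : ∀ s : ℝ, ((circleMap y ρ s - y)^2) ≠ 0 :=
    fun s => pow_ne_zero _ (sub_ne_zero.mpr (circleMap_ne_center hρ.ne'))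
  simp only [deriv_circleMap]
  apply Continuous.fun_smul
  · exact (((continuous_circleMap 0 ρ).mul continuous_const).comp continuous_snd)
  · apply Continuous.fun_smul
    · apply Continuous.inv₀
      · exact (((continuous_circleMap y ρ).sub continuous_const).pow 2).comp continuous_snd
      · exact fun q => hne q.2
    · exact hcg

lemma pdx_differentiableOn {U : Set (ℂ × ℂ)} (hU : IsOpen U) {g : ℂ × ℂ → ℂ}
    (hg : DifferentiableOn ℂ g U) : DifferentiableOn ℂ (pdx g) U := by
  intro p₀ hp₀
  suffices h : DifferentiableAt ℂ (pdx g) p₀ from h.differentiableWithinAt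
  obtain ⟨R, hR, hRU⟩ : ∃ R > 0, closedBall p₀ R ⊆ U :=
    (Metric.nhds_basis_closedBall.mem_iff).1 (hU.mem_nhds hp₀)
  set r := R / 2 with hrdef
  have hr0 : 0 < r := by positivity
  have hrR : r ≤ R := by rw [hrdef]; linarith
  have hmem : ∀ z w : ℂ, dist z p₀.1 ≤ R → dist w p₀.2 ≤ R → (z, w) ∈ U := by
    intro z w h1 h2
    apply hRU
    rw [mem_closedBall, Prod.dist_eq]
    exact max_le h1 h2
  obtain ⟨M, hM⟩ := (isCompact_closedBall p₀ R).exists_bound_of_continuousOn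
    (hg.continuousOn.mono hRU)
  have hM' : ∀ z w : ℂ, dist z p₀.1 ≤ R → dist w p₀.2 ≤ R → ‖g (z, w)‖ ≤ M := by
    intro z w h1 h2
    apply hM
    rw [mem_closedBall, Prod.dist_eq]
    exact max_le h1 h2
  have hM0 : 0 ≤ M := le_trans (norm_nonneg _) (hM p₀ (mem_closedBall_self hR.le))
  have hzR : ∀ θ : ℝ, dist (circleMap p₀.1 R θ) p₀.1 = R := by
    intro θ
    simp [Complex.dist_eq, circleMap_sub_center, norm_circleMap_zero, abs_of_pos hR]
  have hgat : ∀ z w : ℂ, dist z p₀.1 ≤ R → dist w p₀.2 ≤ R → DifferentiableAt ℂ g (z, w) :=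
    fun z w h1 h2 => hg.differentiableAt (hU.mem_nhds (hmem z w h1 h2))
  -- slice differentiability
  have hsliceY : ∀ z w : ℂ, dist z p₀.1 ≤ R → dist w p₀.2 ≤ R →
      DifferentiableAt ℂ (fun v => g (z, v)) w := by
    intro z w h1 h2
    exact (hgat z w h1 h2).comp w ((differentiableAt_const z).prodMk differentiableAt_id)
  -- the bound on the y-partial on the circle
  have hpdy_bound : ∀ (θ : ℝ) (w : ℂ), dist w p₀.2 ≤ r →
      ‖deriv (fun v => g (circleMap p₀.1 R θ, v)) w‖ ≤ 4 * M / R := by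
    intro θ w hw
    have hV : IsOpen {v : ℂ | (circleMap p₀.1 R θ, v) ∈ U} := hU.preimage (by fun_prop)
    apply cauchy_bound hV (c := p₀.2) (M := M) ?_ hR ?_ ?_ (by rw [← hrdef]; exact hw)
    · intro v hv
      exact ((hg.differentiableAt (hU.mem_nhds hv)).comp v
        ((differentiableAt_const _).prodMk differentiableAt_id)).differentiableWithinAt
    · intro v hv
      exact hmem _ v (hzR θ).le (mem_closedBall.1 hv)
    · intro v hv
      exact hM' _ v (hzR θ).le (mem_sphere.1 hv).le
  -- distance facts for p in the small ball
  have hpball : ∀ p : ℂ × ℂ, p ∈ ball p₀ r → dist p.1 p₀.1 < r ∧ dist p.2 p₀.2 < r := by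
    intro p hp
    rw [mem_ball, Prod.dist_eq, max_lt_iff] at hp
    exact hp
  have hzp : ∀ (θ : ℝ) (p : ℂ × ℂ), p ∈ ball p₀ r → r ≤ dist (circleMap p₀.1 R θ) p.1 := by
    intro θ p hp
    have h1 := (hpball p hp).1
    have h2 := dist_triangle (circleMap p₀.1 R θ) p.1 p₀.1
    have h3 := hzR θ
    linarith
  have hzp0 : ∀ (θ : ℝ) (p : ℂ × ℂ), p ∈ ball p₀ r → circleMap p₀.1 R θ - p.1 ≠ 0 := by
    intro θ p hp
    have := hzp θ p hp
    intro hcon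
    rw [sub_eq_zero] at hcon
    rw [hcon, dist_self] at this
    linarith
  -- the integrand and its derivative in the parameter
  set F : (ℂ × ℂ) → ℝ → ℂ := fun p θ =>
    deriv (circleMap p₀.1 R) θ *
      (((circleMap p₀.1 R θ - p.1) ^ 2)⁻¹ * g (circleMap p₀.1 R θ, p.2)) with hF
  set F' : (ℂ × ℂ) → ℝ → (ℂ × ℂ) →L[ℂ] ℂ := fun p θ =>
    deriv (circleMap p₀.1 R) θ •
      ((((circleMap p₀.1 R θ - p.1) ^ 2)⁻¹ •
          ((deriv (fun v => g (circleMap p₀.1 R θ, v)) p.2) • ContinuousLinearMap.snd ℂ ℂ ℂ)) +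
        (g (circleMap p₀.1 R θ, p.2)) •
          ((2 * ((circleMap p₀.1 R θ - p.1) ^ 3)⁻¹) • ContinuousLinearMap.fst ℂ ℂ ℂ)) with hF'
  -- differentiability of the integrand in the parameter
  have hdiff : ∀ (θ : ℝ) (p : ℂ × ℂ), p ∈ ball p₀ r → HasFDerivAt (fun q => F q θ) (F' p θ) p := by
    intro θ p hp
    have hzne := hzp0 θ p hp
    have hA1 : HasDerivAt (fun x : ℂ => ((circleMap p₀.1 R θ - x) ^ 2)⁻¹)
        (2 * ((circleMap p₀.1 R θ - p.1) ^ 3)⁻¹) p.1 := by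
      have h0 : HasDerivAt (fun x : ℂ => circleMap p₀.1 R θ - x) (-1) p.1 := by
        simpa using (hasDerivAt_id p.1).const_sub (circleMap p₀.1 R θ)
      have h1 := h0.fun_pow 2
      have h2 := h1.fun_inv (pow_ne_zero 2 hzne)
      refine h2.congr_deriv ?_
      field_simp
      ring
    have hA : HasFDerivAt (fun q : ℂ × ℂ => ((circleMap p₀.1 R θ - q.1) ^ 2)⁻¹)
        ((2 * ((circleMap p₀.1 R θ - p.1) ^ 3)⁻¹) • ContinuousLinearMap.fst ℂ ℂ ℂ) p :=
      hA1.comp_hasFDerivAt p (hasFDerivAt_fst)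
    have hB1 : HasDerivAt (fun v => g (circleMap p₀.1 R θ, v))
        (deriv (fun v => g (circleMap p₀.1 R θ, v)) p.2) p.2 := by
      apply DifferentiableAt.hasDerivAt
      exact hsliceY _ _ (hzR θ).le (le_trans (hpball p hp).2.le hrR)
    have hB : HasFDerivAt (fun q : ℂ × ℂ => g (circleMap p₀.1 R θ, q.2))
        ((deriv (fun v => g (circleMap p₀.1 R θ, v)) p.2) • ContinuousLinearMap.snd ℂ ℂ ℂ) p :=
      hB1.comp_hasFDerivAt p (hasFDerivAt_snd)
    exact (hA.mul hB).const_mul _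
  -- the uniform bound on the derivative
  set C : ℝ := R * ((r ^ 2)⁻¹ * (4 * M / R) + M * (2 * (r ^ 3)⁻¹)) with hC
  have hnorm_dcm : ∀ θ : ℝ, ‖deriv (circleMap p₀.1 R) θ‖ = R := by
    intro θ
    simp [deriv_circleMap, abs_of_pos hR]
  have hnorm_sub : ∀ (θ : ℝ) (p : ℂ × ℂ), p ∈ ball p₀ r →
      ∀ n : ℕ, ‖((circleMap p₀.1 R θ - p.1) ^ n)⁻¹‖ ≤ (r ^ n)⁻¹ := by
    intro θ p hp n
    rw [norm_inv, norm_pow]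
    have h1 : ‖circleMap p₀.1 R θ - p.1‖ = dist (circleMap p₀.1 R θ) p.1 := by
      rw [Complex.dist_eq]
    rw [h1]
    have := hzp θ p hp
    apply inv_anti₀ (by positivity)
    exact pow_le_pow_left₀ hr0.le this n
  have hbnd : ∀ (θ : ℝ) (p : ℂ × ℂ), p ∈ ball p₀ r → ‖F' p θ‖ ≤ C := by
    intro θ p hp
    simp only [hF']
    rw [hC]
    refine le_trans (ContinuousLinearMap.opNorm_smul_le _ _) ?_
    rw [hnorm_dcm]
    apply mul_le_mul_of_nonneg_left _ hR.le
    refine le_trans (norm_add_le _ _) (add_le_add ?_ ?_)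
    · refine le_trans (ContinuousLinearMap.opNorm_smul_le _ _) ?_
      have h1 := hnorm_sub θ p hp 2
      have h2 := hpdy_bound θ p.2 (hpball p hp).2.le
      have h3 : ‖(ContinuousLinearMap.snd ℂ ℂ ℂ : (ℂ × ℂ) →L[ℂ] ℂ)‖ ≤ 1 :=
        ContinuousLinearMap.norm_snd_le ℂ ℂ ℂ
      have hin : ‖(deriv (fun v => g (circleMap p₀.1 R θ, v)) p.2) •
          (ContinuousLinearMap.snd ℂ ℂ ℂ : (ℂ × ℂ) →L[ℂ] ℂ)‖ ≤ 4 * M / R := by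
        refine le_trans (ContinuousLinearMap.opNorm_smul_le _ _) ?_
        calc ‖deriv (fun v => g (circleMap p₀.1 R θ, v)) p.2‖ *
              ‖(ContinuousLinearMap.snd ℂ ℂ ℂ : (ℂ × ℂ) →L[ℂ] ℂ)‖
            ≤ (4 * M / R) * 1 := mul_le_mul h2 h3 (norm_nonneg _) (by positivity)
          _ = 4 * M / R := mul_one _
      exact mul_le_mul h1 hin (norm_nonneg _) (by positivity)
    · refine le_trans (ContinuousLinearMap.opNorm_smul_le _ _) ?_
      have h1 := hnorm_sub θ p hp 3
      have h2 : ‖g (circleMap p₀.1 R θ, p.2)‖ ≤ M :=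
        hM' _ _ (hzR θ).le (le_trans (hpball p hp).2.le hrR)
      have h3 : ‖(ContinuousLinearMap.fst ℂ ℂ ℂ : (ℂ × ℂ) →L[ℂ] ℂ)‖ ≤ 1 :=
        ContinuousLinearMap.norm_fst_le ℂ ℂ ℂ
      have hin : ‖(2 * ((circleMap p₀.1 R θ - p.1) ^ 3)⁻¹) •
          (ContinuousLinearMap.fst ℂ ℂ ℂ : (ℂ × ℂ) →L[ℂ] ℂ)‖ ≤ 2 * (r ^ 3)⁻¹ := by
        refine le_trans (ContinuousLinearMap.opNorm_smul_le _ _) ?_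
        have h4 : ‖2 * ((circleMap p₀.1 R θ - p.1) ^ 3)⁻¹‖ ≤ 2 * (r ^ 3)⁻¹ := by
          rw [norm_mul]
          have h5 : ‖(2 : ℂ)‖ = 2 := by norm_num
          rw [h5]
          exact mul_le_mul_of_nonneg_left h1 (by norm_num)
        calc ‖2 * ((circleMap p₀.1 R θ - p.1) ^ 3)⁻¹‖ *
              ‖(ContinuousLinearMap.fst ℂ ℂ ℂ : (ℂ × ℂ) →L[ℂ] ℂ)‖
            ≤ (2 * (r ^ 3)⁻¹) * 1 := mul_le_mul h4 h3 (norm_nonneg _) (by positivity)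
          _ = 2 * (r ^ 3)⁻¹ := mul_one _
      exact mul_le_mul h2 hin (norm_nonneg _) hM0
  have hcontF : ∀ p : ℂ × ℂ, p ∈ ball p₀ r → Continuous (F p) := by
    intro p hp
    rw [hF]
    simp only [deriv_circleMap]
    apply Continuous.mul
    · exact (continuous_circleMap 0 R).mul continuous_const
    · apply Continuous.mul
      · apply Continuous.inv₀
        · exact ((continuous_circleMap p₀.1 R).sub continuous_const).pow 2
        · exact fun θ => pow_ne_zero _ (hzp0 θ p hp)
      · apply hg.continuousOn.comp_continuous
        · exact (continuous_circleMap p₀.1 R).prodMk continuous_const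
        · exact fun θ => hmem _ _ (hzR θ).le (le_trans (hpball p hp).2.le hrR)
  have hF_meas : ∀ᶠ p in 𝓝 p₀,
      MeasureTheory.AEStronglyMeasurable (F p)
        (MeasureTheory.volume.restrict (Set.uIoc 0 (2*π))) := by
    filter_upwards [ball_mem_nhds p₀ hr0] with p hp
    exact (hcontF p hp).aestronglyMeasurable
  have hF_int : IntervalIntegrable (F p₀) MeasureTheory.volume 0 (2*π) :=
    (hcontF p₀ (mem_ball_self hr0)).intervalIntegrable _ _
  have hF'_meas : MeasureTheory.AEStronglyMeasurable (F' p₀)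
      (MeasureTheory.volume.restrict (Set.uIoc 0 (2*π))) := by
    apply Continuous.aestronglyMeasurable
    rw [hF']
    simp only [deriv_circleMap]
    apply Continuous.fun_smul
    · exact (continuous_circleMap 0 R).mul continuous_const
    · apply Continuous.add
      · apply Continuous.fun_smul
        · apply Continuous.inv₀
          · exact ((continuous_circleMap p₀.1 R).sub continuous_const).pow 2
          · exact fun θ => pow_ne_zero _ (hzp0 θ p₀ (mem_ball_self hr0))
        · refine Continuous.fun_smul ?_ continuous_const
          exact cont_pdy hU hg hr0 (continuous_circleMap p₀.1 R)
            (fun θ w hw => hmem _ _ (hzR θ).le (le_trans (mem_closedBall.1 hw) hrR))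
      · apply Continuous.fun_smul
        · apply hg.continuousOn.comp_continuous
          · exact (continuous_circleMap p₀.1 R).prodMk continuous_const
          · exact fun θ => hmem _ _ (hzR θ).le (by rw [dist_self]; exact hR.le)
        · refine Continuous.fun_smul ?_ continuous_const
          apply Continuous.mul continuous_const
          apply Continuous.inv₀
          · exact ((continuous_circleMap p₀.1 R).sub continuous_const).pow 3
          · exact fun θ => pow_ne_zero _ (hzp0 θ p₀ (mem_ball_self hr0))
  have key := intervalIntegral.hasFDerivAt_integral_of_dominated_of_fderiv_le
    (𝕜 := ℂ) (F := F) (F' := F') (x₀ := p₀) (bound := fun _ => C)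
    (μ := MeasureTheory.volume) (a := 0) (b := 2*π) (ball_mem_nhds p₀ hr0) hF_meas hF_int hF'_meas
    (MeasureTheory.ae_of_all _ (fun θ _ p hp => hbnd θ p hp))
    intervalIntegrable_const
    (MeasureTheory.ae_of_all _ (fun θ _ p hp => hdiff θ p hp))
  have hΨ : DifferentiableAt ℂ
      (fun p => (2 * (π:ℂ) * I)⁻¹ * ∫ θ in (0:ℝ)..(2*π), F p θ) p₀ :=
    (key.differentiableAt).const_mul _
  apply hΨ.congr_of_eventuallyEq
  filter_upwards [ball_mem_nhds p₀ hr0] with p hp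
  have hVx : IsOpen {z : ℂ | (z, p.2) ∈ U} := hU.preimage (by fun_prop)
  have hsx : DifferentiableOn ℂ (fun z => g (z, p.2)) {z | (z, p.2) ∈ U} := by
    intro z hz
    exact ((hg.differentiableAt (hU.mem_nhds hz)).comp z
      (differentiableAt_id.prodMk (differentiableAt_const _))).differentiableWithinAt
  have hsub : closedBall p₀.1 R ⊆ {z : ℂ | (z, p.2) ∈ U} :=
    fun z hz => hmem _ _ (mem_closedBall.1 hz) (le_trans (hpball p hp).2.le hrR)
  have hball : p.1 ∈ ball p₀.1 R := mem_ball.2 (lt_of_lt_of_le (hpball p hp).1 hrR)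
  have hrep := Complex.two_pi_I_inv_smul_circleIntegral_sub_sq_inv_smul_of_differentiable
    hVx hsub hsx hball
  show pdx g p = _
  rw [pdx, ← hrep, circleIntegral]
  simp only [smul_eq_mul, hF]


lemma pdy_differentiableOn {U : Set (ℂ × ℂ)} (hU : IsOpen U) {g : ℂ × ℂ → ℂ}
    (hg : DifferentiableOn ℂ g U) : DifferentiableOn ℂ (pdy g) U := by
  have hopen : IsOpen {q : ℂ × ℂ | (q.2, q.1) ∈ U} := hU.preimage (by fun_prop)
  have hswap : DifferentiableOn ℂ (fun q : ℂ × ℂ => g (q.2, q.1))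
      {q : ℂ × ℂ | (q.2, q.1) ∈ U} := by
    intro q hq
    exact ((hg.differentiableAt (hU.mem_nhds hq)).comp q
      (differentiableAt_snd.prodMk differentiableAt_fst)).differentiableWithinAt
  have h1 := pdx_differentiableOn hopen hswap
  intro p hp
  have h2 : DifferentiableAt ℂ (pdx fun q : ℂ × ℂ => g (q.2, q.1)) (p.2, p.1) := by
    have h3 : ((p.2, p.1) : ℂ × ℂ) ∈ {q : ℂ × ℂ | (q.2, q.1) ∈ U} := hp
    exact (h1 _ h3).differentiableAt (hopen.mem_nhds h3)
  have h4 : DifferentiableAt ℂ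
      (fun p : ℂ × ℂ => pdx (fun q : ℂ × ℂ => g (q.2, q.1)) (p.2, p.1)) p :=
    h2.comp (f := fun q : ℂ × ℂ => (q.2, q.1)) p (differentiableAt_snd.prodMk differentiableAt_fst)
  exact (h4.congr_of_eventuallyEq
    (Filter.Eventually.of_forall (fun q => rfl))).differentiableWithinAt

lemma sliceX_diffAt {U : Set (ℂ × ℂ)} (hU : IsOpen U) {h : ℂ × ℂ → ℂ}
    (hh : DifferentiableOn ℂ h U) {p : ℂ × ℂ} (hp : p ∈ U) :
    DifferentiableAt ℂ (fun z => h (z, p.2)) p.1 :=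
  (hh.differentiableAt (hU.mem_nhds hp)).comp p.1
    (differentiableAt_id.prodMk (differentiableAt_const _))

lemma sliceY_diffAt {U : Set (ℂ × ℂ)} (hU : IsOpen U) {h : ℂ × ℂ → ℂ}
    (hh : DifferentiableOn ℂ h U) {p : ℂ × ℂ} (hp : p ∈ U) :
    DifferentiableAt ℂ (fun z => h (p.1, z)) p.2 :=
  (hh.differentiableAt (hU.mem_nhds hp)).comp p.2
    ((differentiableAt_const _).prodMk differentiableAt_id)

end helpers

/-- Let `α i = (a i) dx + (b i) dy`, `i = 1,2,3`, be holomorphic 1-forms on a domain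
`U ⊆ ℂ²` with pairwise wedge products nowhere zero, satisfying `α₁ + α₂ + α₃ = 0`.
Then there exists a unique holomorphic 1-form `η = e dx + f dy` with `dα i = η ∧ α i`
for each `i`; in coordinates, `∂x(b i) - ∂y(a i) = e·(b i) - f·(a i)` on `U`. -/
theorem stmt_2 (U : Set (ℂ × ℂ)) (hU : IsOpen U)
    (a b : Fin 3 → (ℂ × ℂ → ℂ))
    (ha : ∀ i, DifferentiableOn ℂ (a i) U) (hb : ∀ i, DifferentiableOn ℂ (b i) U)
    (hwedge : ∀ i j, i ≠ j → ∀ p ∈ U, a i p * b j p - a j p * b i p ≠ 0)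
    (hsum : ∀ p ∈ U, (∑ i, a i p) = 0 ∧ (∑ i, b i p) = 0) :
    ∃ e f : ℂ × ℂ → ℂ, DifferentiableOn ℂ e U ∧ DifferentiableOn ℂ f U ∧
      (∀ i, ∀ p ∈ U, pdx (b i) p - pdy (a i) p = e p * b i p - f p * a i p) ∧
      ∀ e' f' : ℂ × ℂ → ℂ,
        (∀ i, ∀ p ∈ U, pdx (b i) p - pdy (a i) p = e' p * b i p - f' p * a i p) →
        ∀ p ∈ U, e' p = e p ∧ f' p = f p := by
  have hDne : ∀ p ∈ U, a 0 p * b 1 p - a 1 p * b 0 p ≠ 0 :=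
    fun p hp => hwedge 0 1 (by decide) p hp
  have hcd : ∀ i : Fin 3, DifferentiableOn ℂ (fun p => pdx (b i) p - pdy (a i) p) U := fun i =>
    (pdx_differentiableOn hU (hb i)).sub (pdy_differentiableOn hU (ha i))
  set e : ℂ × ℂ → ℂ := fun p =>
    (a 0 p * (pdx (b 1) p - pdy (a 1) p) - a 1 p * (pdx (b 0) p - pdy (a 0) p)) /
      (a 0 p * b 1 p - a 1 p * b 0 p) with hedef
  set f : ℂ × ℂ → ℂ := fun p =>
    (b 0 p * (pdx (b 1) p - pdy (a 1) p) - b 1 p * (pdx (b 0) p - pdy (a 0) p)) /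
      (a 0 p * b 1 p - a 1 p * b 0 p) with hfdef
  clear_value e f
  have hed : DifferentiableOn ℂ e U := by
    rw [hedef]
    simp only [div_eq_mul_inv]
    exact (((ha 0).mul (hcd 1)).sub ((ha 1).mul (hcd 0))).mul
      (DifferentiableOn.inv (((ha 0).mul (hb 1)).sub ((ha 1).mul (hb 0))) hDne)
  have hfd : DifferentiableOn ℂ f U := by
    rw [hfdef]
    simp only [div_eq_mul_inv]
    exact (((hb 0).mul (hcd 1)).sub ((hb 1).mul (hcd 0))).mul
      (DifferentiableOn.inv (((ha 0).mul (hb 1)).sub ((ha 1).mul (hb 0))) hDne)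
  have heq0 : ∀ p ∈ U, pdx (b 0) p - pdy (a 0) p = e p * b 0 p - f p * a 0 p := by
    intro p hp
    have hD := hDne p hp
    rw [hedef, hfdef]
    field_simp
    ring
  have heq1 : ∀ p ∈ U, pdx (b 1) p - pdy (a 1) p = e p * b 1 p - f p * a 1 p := by
    intro p hp
    have hD := hDne p hp
    rw [hedef, hfdef]
    field_simp
    ring
  have hsum_a : ∀ p ∈ U, a 2 p = -a 0 p - a 1 p := by
    intro p hp
    have h := (hsum p hp).1
    rw [Fin.sum_univ_three] at h
    linear_combination h
  have hsum_b : ∀ p ∈ U, b 2 p = -b 0 p - b 1 p := by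
    intro p hp
    have h := (hsum p hp).2
    rw [Fin.sum_univ_three] at h
    linear_combination h
  have hc2 : ∀ p ∈ U, pdx (b 2) p - pdy (a 2) p =
      -(pdx (b 0) p - pdy (a 0) p) - (pdx (b 1) p - pdy (a 1) p) := by
    intro p hp
    have hpx : {z : ℂ | (z, p.2) ∈ U} ∈ nhds p.1 :=
      (hU.preimage (by fun_prop)).mem_nhds hp
    have hpy : {z : ℂ | (p.1, z) ∈ U} ∈ nhds p.2 :=
      (hU.preimage (by fun_prop)).mem_nhds hp
    have hx : pdx (b 2) p = -pdx (b 0) p - pdx (b 1) p := by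
      have hev : (fun z => b 2 (z, p.2)) =ᶠ[nhds p.1]
          (fun z => -b 0 (z, p.2) - b 1 (z, p.2)) := by
        filter_upwards [hpx] with z hz
        have h := (hsum (z, p.2) hz).2
        rw [Fin.sum_univ_three] at h
        linear_combination h
      have d0 := sliceX_diffAt hU (hb 0) hp
      have d1 := sliceX_diffAt hU (hb 1) hp
      rw [pdx, hev.deriv_eq, deriv_fun_sub d0.fun_neg d1, deriv.fun_neg]
      rfl
    have hy : pdy (a 2) p = -pdy (a 0) p - pdy (a 1) p := by
      have hev : (fun z => a 2 (p.1, z)) =ᶠ[nhds p.2]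
          (fun z => -a 0 (p.1, z) - a 1 (p.1, z)) := by
        filter_upwards [hpy] with z hz
        have h := (hsum (p.1, z) hz).1
        rw [Fin.sum_univ_three] at h
        linear_combination h
      have d0 := sliceY_diffAt hU (ha 0) hp
      have d1 := sliceY_diffAt hU (ha 1) hp
      rw [pdy, hev.deriv_eq, deriv_fun_sub d0.fun_neg d1, deriv.fun_neg]
      rfl
    rw [hx, hy]
    ring
  refine ⟨e, f, hed, hfd, ?_, ?_⟩
  · intro i p hp
    fin_cases i
    · exact heq0 p hp
    · exact heq1 p hp
    · show pdx (b 2) p - pdy (a 2) p = e p * b 2 p - f p * a 2 p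
      rw [hc2 p hp, heq0 p hp, heq1 p hp, hsum_a p hp, hsum_b p hp]
      ring
  · intro e' f' h' p hp
    have h0 := h' 0 p hp
    have h1 := h' 1 p hp
    have g0 := heq0 p hp
    have g1 := heq1 p hp
    have hD := hDne p hp
    have hee : (e' p - e p) * (a 0 p * b 1 p - a 1 p * b 0 p) = 0 := by
      linear_combination a 0 p * g1 - a 0 p * h1 + a 1 p * h0 - a 1 p * g0
    have hff : (f' p - f p) * (a 0 p * b 1 p - a 1 p * b 0 p) = 0 := by
      linear_combination b 0 p * g1 - b 0 p * h1 + b 1 p * h0 - b 1 p * g0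
    constructor
    · exact sub_eq_zero.1 ((mul_eq_zero.1 hee).resolve_right hD)
    · exact sub_eq_zero.1 ((mul_eq_zero.1 hff).resolve_right hD)
end

section
/- Let h₁,…,h_k be linear forms in n variables whose corresponding points in ℙ^{n-1} are in general position (any m ≤ n of the forms are linearly independent). Then for every positive integer j, the dimension of the span of h₁^j,…,h_k^j in ℂ_j[x₁,…,x_n] is at least min(k, j(n-1)+1). -/
open MvPolynomial

noncomputable def compD (n : ℕ) : ∀ jj : ℕ, (Fin jj → Fin n → ℂ) →
    (MvPolynomial (Fin n) ℂ →ₗ[ℂ] MvPolynomial (Fin n) ℂ)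
  | 0, _ => LinearMap.id
  | (jj+1), v => (compD n jj (Fin.tail v)).comp
      (MvPolynomial.mkDerivation ℂ (fun a => (C (v 0 a) : MvPolynomial (Fin n) ℂ))).toLinearMap
lemma mkDerivation_linform (n : ℕ) (v g : Fin n → ℂ) :
    (MvPolynomial.mkDerivation ℂ (fun a => (C (v a) : MvPolynomial (Fin n) ℂ)))
      (∑ a : Fin n, C (g a) * X a) = C (∑ a : Fin n, g a * v a) := by
  rw [map_sum, map_sum]
  refine Finset.sum_congr rfl fun a _ => ?_
  rw [C_mul', Derivation.map_smul, mkDerivation_X, smul_eq_C_mul, ← C_mul]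

lemma compD_pow (n : ℕ) : ∀ (jj : ℕ) (v : Fin jj → Fin n → ℂ) (g : Fin n → ℂ) (c : ℂ),
    compD n jj v (C c * (∑ a : Fin n, C (g a) * X a) ^ jj)
      = C (c * (Nat.factorial jj) * ∏ t : Fin jj, ∑ a : Fin n, g a * v t a)
  | 0, v, g, c => by simp [compD]
  | (jj+1), v, g, c => by
    rw [compD]
    simp only [LinearMap.comp_apply]
    have hD : (MvPolynomial.mkDerivation ℂ (fun a => (C (v 0 a) : MvPolynomial (Fin n) ℂ)))
        (C c * (∑ a : Fin n, C (g a) * X a) ^ (jj+1))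
        = C (c * (jj+1) * (∑ a : Fin n, g a * v 0 a)) * (∑ a : Fin n, C (g a) * X a) ^ jj := by
      rw [C_mul', Derivation.map_smul, Derivation.leibniz_pow, mkDerivation_linform]
      simp only [Nat.add_sub_cancel, smul_eq_mul, nsmul_eq_mul, smul_eq_C_mul]
      push_cast [C_mul, map_add, map_one, map_natCast]
      ring
    erw [hD]
    rw [compD_pow n jj (Fin.tail v) g]
    congr 1
    rw [Fin.prod_univ_succ]
    simp only [Fin.tail]
    push_cast [Nat.factorial_succ]
    ring

lemma exists_perp {n : ℕ} (G : Set (Fin n → ℂ)) (x : Fin n → ℂ)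
    (hx : x ∉ Submodule.span ℂ G) :
    ∃ v : Fin n → ℂ, (∑ a, x a * v a) = 1 ∧ ∀ y ∈ G, (∑ a, y a * v a) = 0 := by
  obtain ⟨f, hf, hbot⟩ := (Submodule.span ℂ G).exists_dual_map_eq_bot_of_notMem hx inferInstance
  have key : ∀ z : Fin n → ℂ, (∑ a, z a * ((f x)⁻¹ * f (Pi.single a 1))) = (f x)⁻¹ * f z := by
    intro z
    have hz : z = ∑ a, z a • (Pi.single a (1:ℂ) : Fin n → ℂ) := by
      ext b; simp [Pi.single_apply]
    conv_rhs => rw [hz]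
    rw [map_sum, Finset.mul_sum]
    refine Finset.sum_congr rfl fun a _ => ?_
    rw [map_smul]
    simp [smul_eq_mul]; ring
  refine ⟨fun a => (f x)⁻¹ * f (Pi.single a 1), ?_, ?_⟩
  · rw [key, inv_mul_cancel₀ hf]
  · intro y hy
    rw [key]
    have : f y = 0 := by
      have : f y ∈ (Submodule.span ℂ G).map f := Submodule.mem_map_of_mem
        (Submodule.subset_span hy)
      rwa [hbot, Submodule.mem_bot] at this
    simp [this]

lemma exists_groups {k n jj : ℕ} (T : Finset (Fin k)) (hT : T.card ≤ jj * (n - 1)) :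
    ∃ G : Fin jj → Finset (Fin k), (∀ t, (G t) ⊆ T ∧ (G t).card ≤ n - 1) ∧
      ∀ x ∈ T, ∃ t, x ∈ G t := by
  classical
  rcases Nat.eq_zero_or_pos (n - 1) with h0 | hpos
  · have : T = ∅ := by
      rw [h0, Nat.mul_zero] at hT
      exact Finset.card_eq_zero.mp (Nat.le_zero.mp hT)
    exact ⟨fun _ => ∅, fun t => ⟨Finset.empty_subset _, Nat.zero_le _⟩,
      by simp [this]⟩
  · set e := T.equivFin with he
    refine ⟨fun t => Finset.image (fun r : Fin T.card => (e.symm r : Fin k))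
      ((Finset.univ : Finset (Fin T.card)).filter (fun r : Fin T.card => (r : ℕ) / (n - 1) = (t : ℕ))),
      fun t => ⟨?_, ?_⟩, ?_⟩
    · intro x hx
      simp only [Finset.mem_image] at hx
      obtain ⟨r, _, rfl⟩ := hx
      exact (e.symm r).2
    · refine le_trans (Finset.card_image_le) ?_
      have : ((Finset.univ : Finset (Fin T.card)).filter
          (fun r : Fin T.card => (r : ℕ) / (n - 1) = (t : ℕ))).card ≤
          (Finset.Ico ((t : ℕ) * (n - 1)) ((t : ℕ) * (n - 1) + (n - 1))).card := by
        apply Finset.card_le_card_of_injOn (fun r : Fin T.card => (r : ℕ))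
        · intro r hr
          simp only [Finset.coe_filter, Set.mem_setOf_eq, Finset.mem_filter, Finset.mem_univ, true_and] at hr
          rw [Finset.mem_coe, Finset.mem_Ico]
          constructor
          · calc (t : ℕ) * (n - 1) = ((r : ℕ) / (n - 1)) * (n - 1) := by rw [hr]
              _ ≤ (r : ℕ) := Nat.div_mul_le_self _ _
          · have h2 : (r : ℕ) < ((t : ℕ) + 1) * (n - 1) :=
              (Nat.div_lt_iff_lt_mul hpos).mp (by rw [hr]; exact Nat.lt_succ_self _)
            rw [Nat.succ_mul] at h2
            exact h2
        · intro a _ b _ hab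
          exact Fin.val_injective hab
      simpa using this
    · intro x hx
      have hr : (e ⟨x, hx⟩ : ℕ) < jj * (n - 1) := lt_of_lt_of_le (e ⟨x, hx⟩).2 hT
      have ht : ((e ⟨x, hx⟩ : ℕ)) / (n - 1) < jj :=
        Nat.div_lt_of_lt_mul (by rw [Nat.mul_comm] at hr; exact hr)
      refine ⟨⟨_, ht⟩, ?_⟩
      simp only [Finset.mem_image, Finset.mem_filter, Finset.mem_univ, true_and]
      exact ⟨e ⟨x, hx⟩, rfl, by simp⟩

/-- Let `h₁, …, h_k` be linear forms in `n` variables (coefficient vectors `h i`) whose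
corresponding points of `ℙ^{n-1}` are in general position: any `m ≤ n` of the forms are
linearly independent.  Then for every `j ≥ 1` the span of `ℓ₁^j, …, ℓ_k^j` in the space of
degree-`j` homogeneous polynomials has dimension at least `min (k, j(n-1)+1)`. -/
theorem stmt_6 (n k j : ℕ) (hn : 1 ≤ n) (hj : 1 ≤ j)
    (h : Fin k → (Fin n → ℂ))
    (hgen : ∀ I : Finset (Fin k), I.card ≤ n →
      LinearIndependent ℂ (fun i : I => h i.1)) :
    min k (j * (n - 1) + 1) ≤
      Module.finrank ℂ ↥(Submodule.span ℂ (Set.range fun i : Fin k =>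
        (∑ a : Fin n, MvPolynomial.C (h i a) * MvPolynomial.X a) ^ j)) := by
  classical
  set F : Fin k → MvPolynomial (Fin n) ℂ :=
    fun i => (∑ a : Fin n, C (h i a) * X a) ^ j with hF
  set m := min k (j * (n - 1) + 1) with hm
  obtain ⟨S, -, hScard⟩ := Finset.exists_subset_card_eq (s := (Finset.univ : Finset (Fin k))) (n := m)
    (by simp [hm, min_le_left])
  have hli : LinearIndependent ℂ (fun i : S => F i.1) := by
    rw [Fintype.linearIndependent_iff]
    intro g hg i₀
    have hT : (S.erase i₀.1).card ≤ j * (n - 1) := by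
      have h1 := Finset.card_erase_of_mem i₀.2
      have h2 : m ≤ j * (n - 1) + 1 := min_le_right _ _
      omega
    obtain ⟨G, hG, hcover⟩ := exists_groups (S.erase i₀.1) hT
    have hv : ∀ t : Fin j, ∃ v : Fin n → ℂ, (∑ a, h i₀.1 a * v a) = 1 ∧
        ∀ i ∈ G t, (∑ a, h i a * v a) = 0 := by
      intro t
      have hi₀G : i₀.1 ∉ G t := fun hc =>
        (Finset.notMem_erase i₀.1 S) ((hG t).1 hc)
      have hcard : (insert i₀.1 (G t)).card ≤ n := by
        have h1 := Finset.card_insert_le i₀.1 (G t)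
        have h2 := (hG t).2
        omega
      have li := hgen (insert i₀.1 (G t)) hcard
      have hxnot : (⟨i₀.1, Finset.mem_insert_self _ _⟩ :
          (insert i₀.1 (G t) : Finset (Fin k))) ∉
          {i : (insert i₀.1 (G t) : Finset (Fin k)) | i.1 ∈ G t} := hi₀G
      have hns := li.notMem_span_image hxnot
      have himg : (fun i : (insert i₀.1 (G t) : Finset (Fin k)) => h i.1) ''
          {i | i.1 ∈ G t} = h '' (G t : Set (Fin k)) := by
        ext y
        constructor
        · rintro ⟨i, hi, rfl⟩; exact ⟨i.1, hi, rfl⟩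
        · rintro ⟨x, hx, rfl⟩; exact ⟨⟨x, Finset.mem_insert_of_mem hx⟩, hx, rfl⟩
      rw [himg] at hns
      obtain ⟨v, hv1, hv2⟩ := exists_perp _ _ hns
      exact ⟨v, hv1, fun i hi => hv2 (h i) ⟨i, hi, rfl⟩⟩
    choose v hv1 hv2 using hv
    have h0 := congrArg (compD n j v) hg
    rw [map_sum, map_zero] at h0
    have hterm : ∀ i : S, compD n j v (g i • F i.1)
        = C (g i * (Nat.factorial j) * ∏ t : Fin j, ∑ a, h i.1 a * v t a) := by
      intro i
      rw [LinearMap.map_smul]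
      have hc := compD_pow n j v (h i.1) 1
      rw [C_1, one_mul] at hc
      rw [hF]
      rw [hc, smul_eq_C_mul, ← C_mul]
      congr 1
      ring
    rw [Finset.sum_congr rfl (fun i _ => hterm i), ← map_sum] at h0
    have hsum0 : ∑ i : S, g i * (Nat.factorial j) *
        ∏ t : Fin j, ∑ a, h i.1 a * v t a = 0 := by
      have := MvPolynomial.C_injective (Fin n) ℂ
      exact this (by rw [h0, map_zero])
    have heval : ∀ i : S, i ≠ i₀ → (∏ t : Fin j, ∑ a, h i.1 a * v t a) = 0 := by
      intro i hne
      have hmem : i.1 ∈ S.erase i₀.1 :=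
        Finset.mem_erase.mpr ⟨fun hc => hne (Subtype.ext hc), i.2⟩
      obtain ⟨t, htm⟩ := hcover i.1 hmem
      exact Finset.prod_eq_zero (Finset.mem_univ t) (hv2 t i.1 htm)
    rw [Finset.sum_eq_single_of_mem i₀ (Finset.mem_univ i₀)
      (fun i _ hne => by rw [heval i hne, mul_zero])] at hsum0
    have hprod1 : (∏ t : Fin j, ∑ a, h i₀.1 a * v t a) = 1 := by
      rw [Finset.prod_congr rfl (fun t _ => hv1 t)]
      exact Finset.prod_const_one
    rw [hprod1, mul_one] at hsum0
    have hfac : (Nat.factorial j : ℂ) ≠ 0 :=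
      Nat.cast_ne_zero.mpr (Nat.factorial_ne_zero j)
    exact (mul_eq_zero.mp hsum0).resolve_right hfac
  have hfin : FiniteDimensional ℂ ↥(Submodule.span ℂ (Set.range F)) :=
    FiniteDimensional.span_of_finite ℂ (Set.finite_range F)
  have h1 : Submodule.span ℂ (Set.range fun i : S => F i.1) ≤
      Submodule.span ℂ (Set.range F) :=
    Submodule.span_mono (by rintro _ ⟨i, rfl⟩; exact ⟨i.1, rfl⟩)
  have h2 := Submodule.finrank_mono h1
  rw [finrank_span_eq_card hli] at h2
  simpa [Fintype.card_coe, hScard] using h2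
end

section
/- Let W be a germ of quasi-smooth k-web on (ℂⁿ,0) with filtration F^j A(W) of its space of abelian relations by vanishing order at 0. Then dim( F^j A(W) / F^{j+1} A(W) ) ≤ max(0, k − ℓ^{j+1}(W)), where ℓ^{j+1}(W) is the dimension of the span of the (j+1)-st powers of the linear parts at 0 of the defining submersions. -/
open Filter Asymptotics

private lemma iteratedDeriv_eq_factorial_mul_coeff {f : ℂ → ℂ}
    {p : FormalMultilinearSeries ℂ ℂ ℂ} (h : HasFPowerSeriesAt f p 0) (s : ℕ) :
    iteratedDeriv s f 0 = (Nat.factorial s : ℂ) * p.coeff s := by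
  obtain ⟨rr, hr⟩ := h
  have h2 := hr.factorial_smul (1 : ℂ) s
  rw [iteratedDeriv_eq_iteratedFDeriv, ← h2, nsmul_eq_mul]
  rfl

private lemma hasFPowerSeriesAt_csum {N : ℕ} (c : Fin N → ℂ) (f : Fin N → ℂ → ℂ)
    (p : Fin N → FormalMultilinearSeries ℂ ℂ ℂ)
    (hf : ∀ m, HasFPowerSeriesAt (f m) (p m) 0) :
    HasFPowerSeriesAt (fun t => ∑ m, c m * f m t) (∑ m, c m • p m) 0 := by
  rw [hasFPowerSeriesAt_iff]
  have h' : ∀ᶠ z in nhds (0:ℂ), ∀ m, HasSum (fun s => z ^ s • (p m).coeff s) (f m (0 + z)) :=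
    eventually_all.2 fun m => hasFPowerSeriesAt_iff.1 (hf m)
  filter_upwards [h'] with z hz
  have h3 : HasSum (fun s => ∑ m, c m * (z ^ s • (p m).coeff s)) (∑ m, c m * f m (0 + z)) :=
    hasSum_sum fun m _ => (hz m).mul_left (c m)
  convert h3 using 2 with s
  · rfl
  have h4 : (∑ m, c m • p m) s = ∑ m, c m • (p m) s := Finset.sum_apply _ _ _
  simp only [FormalMultilinearSeries.coeff, h4, ContinuousMultilinearMap.sum_apply,
    ContinuousMultilinearMap.smul_apply, smul_eq_mul, Finset.mul_sum]
  exact Finset.sum_congr rfl fun m _ => by ring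

private lemma key_relation {n k j : ℕ} (u : Fin k → ((Fin n → ℂ) → ℂ))
    (hu : ∀ i, AnalyticAt ℂ (u i) 0) (hu0 : ∀ i, u i 0 = 0)
    (f : Fin k → ℂ → ℂ) (p : Fin k → FormalMultilinearSeries ℂ ℂ ℂ)
    (hf : ∀ i, HasFPowerSeriesAt (f i) (p i) 0)
    (hc : ∀ i, ∀ s ≤ j, (p i).coeff s = 0)
    (hrel : ∀ᶠ x in nhds (0 : Fin n → ℂ), ∑ i, f i (u i x) = 0)
    (v : Fin n → ℂ) :
    ∑ i, (p i).coeff (j + 1) * (fderiv ℂ (u i) 0 v) ^ (j + 1) = 0 := by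
  classical
  set g : Fin k → ℂ → ℂ := fun i t => u i (t • v) with hg
  set A : Fin k → ℂ := fun i => (p i).coeff (j + 1) with hA
  set h : Fin k → ℂ := fun i => fderiv ℂ (u i) 0 v with hh
  -- derivative of g i at 0
  have hline : HasDerivAt (fun t : ℂ => t • v) v 0 := by
    simpa using (hasDerivAt_id (0 : ℂ)).smul_const v
  have hgd : ∀ i, HasDerivAt (g i) (h i) 0 := by
    intro i
    have h1 : HasFDerivAt (u i) (fderiv ℂ (u i) 0) ((0 : ℂ) • v) := by
      rw [zero_smul]; exact (hu i).differentiableAt.hasFDerivAt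
    exact h1.comp_hasDerivAt 0 hline
  have hg0 : ∀ i, g i 0 = 0 := fun i => by simp [hg, hu0 i]
  -- slope limit
  have htends : ∀ i, Filter.Tendsto (fun t => g i t / t) (nhdsWithin 0 {(0:ℂ)}ᶜ) (nhds (h i)) := by
    intro i
    have := hasDerivAt_iff_tendsto_slope.1 (hgd i)
    refine this.congr fun t => ?_
    simp [slope_def_field, hg0 i]
  -- big-O of g
  have hO : ∀ i, (fun t => g i t) =O[nhds (0:ℂ)] (fun t => t) := by
    intro i
    have := (hgd i).hasFDerivAt.isBigO_sub
    simpa [hg0 i] using this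
  -- error term
  have hE : ∀ i, (fun t => f i (g i t) - (g i t) ^ (j + 1) * A i) =O[nhds (0:ℂ)]
      (fun t => t ^ (j + 2)) := by
    intro i
    have h1 := (hf i).isBigO_sub_partialSum_pow (j + 2)
    have h2 : ∀ y : ℂ, (p i).partialSum (j + 2) y = y ^ (j + 1) * A i := by
      intro y
      rw [FormalMultilinearSeries.partialSum]
      rw [Finset.sum_eq_single (j + 1)]
      · simp [FormalMultilinearSeries.apply_eq_pow_smul_coeff, hA, smul_eq_mul]
      · intro s hs hne
        have hsj : s ≤ j := by
          simp only [Finset.mem_range] at hs; omega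
        simp [FormalMultilinearSeries.apply_eq_pow_smul_coeff, hc i s hsj]
      · intro hmem
        exact absurd (Finset.mem_range.2 (by omega)) hmem
    simp only [zero_add, h2] at h1
    have hGt : Filter.Tendsto (g i) (nhds 0) (nhds 0) := by
      have := (hgd i).continuousAt.tendsto
      rwa [hg0 i] at this
    have h3 := h1.comp_tendsto hGt
    have h4 : (fun t => ‖g i t‖ ^ (j + 2)) =O[nhds (0:ℂ)] (fun t => t ^ (j + 2)) := by
      have := ((hO i).pow (j + 2)).norm_left
      simpa [norm_pow] using this
    exact (h3.trans h4)
  -- pull back relation to the line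
  have hlinet : Filter.Tendsto (fun t : ℂ => t • v) (nhds 0) (nhds 0) := by
    have := hline.continuousAt.tendsto
    simpa using this
  have hrel' : ∀ᶠ t in nhds (0:ℂ), ∑ i, f i (g i t) = 0 := hlinet.eventually hrel
  -- F is little-o of t^(j+1)
  set F : ℂ → ℂ := fun t => ∑ i, (g i t) ^ (j + 1) * A i with hF
  have hFbig : F =O[nhds (0:ℂ)] (fun t => t ^ (j + 2)) := by
    have hsum : (fun t => ∑ i, (f i (g i t) - (g i t) ^ (j + 1) * A i)) =O[nhds (0:ℂ)]
        (fun t => t ^ (j + 2)) := IsBigO.fun_sum fun i _ => hE i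
    refine hsum.neg_left.congr' ?_ (by rfl)
    filter_upwards [hrel'] with t ht
    simp [hF, ← Finset.sum_neg_distrib, neg_sub]
    exact ht
  have hFo : F =o[nhds (0:ℂ)] (fun t => t ^ (j + 1)) :=
    hFbig.trans_isLittleO (isLittleO_pow_pow (by omega))
  have hdiv : Filter.Tendsto (fun t => F t / t ^ (j + 1)) (nhdsWithin 0 {(0:ℂ)}ᶜ)
      (nhds 0) := hFo.tendsto_div_nhds_zero.mono_left nhdsWithin_le_nhds
  have hdiv2 : Filter.Tendsto (fun t => ∑ i, (g i t / t) ^ (j + 1) * A i)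
      (nhdsWithin 0 {(0:ℂ)}ᶜ) (nhds (∑ i, (h i) ^ (j + 1) * A i)) := by
    refine tendsto_finset_sum _ fun i _ => ?_
    exact ((htends i).pow (j + 1)).mul_const (A i)
  have heq : ∀ᶠ t in nhdsWithin 0 {(0:ℂ)}ᶜ,
      F t / t ^ (j + 1) = ∑ i, (g i t / t) ^ (j + 1) * A i := by
    filter_upwards [self_mem_nhdsWithin] with t ht
    have ht' : t ≠ 0 := ht
    rw [hF]
    rw [Finset.sum_div]
    refine Finset.sum_congr rfl fun i _ => ?_
    rw [div_pow]
    field_simp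
  have := tendsto_nhds_unique (hdiv.congr' heq) hdiv2
  rw [eq_comm] at this
  rw [← this]
  refine Finset.sum_congr rfl fun i _ => by rw [hA, hh]; ring

/-- Let `W` be a germ of quasi-smooth `k`-web on `(ℂⁿ,0)`, given by holomorphic submersions
`u i : (ℂⁿ,0) → (ℂ,0)` whose differentials at `0` are nonzero and pairwise non-proportional.
Abelian relations are represented by their primitives: tuples `g = (g i)` of germs of
holomorphic functions vanishing at `0` with `∑ i, g i ∘ u i = 0` near `0`; the component
1-forms are `η i = d(g i ∘ u i)`.  A relation lies in `F^j A(W)` iff the derivatives of each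
`g i` at `0` vanish up to order `j` (so each `η i` vanishes to order `j` at `0`).  Then
`dim (F^j A(W) / F^{j+1} A(W)) ≤ max (0, k - ℓ^{j+1}(W))`, where `ℓ^{j+1}(W)` is the
dimension of the span of the `(j+1)`-st powers of the linear parts of the `u i` at `0`:
i.e. any family of relations in `F^j A(W)` that is linearly independent modulo
`F^{j+1} A(W)` has at most `k - ℓ^{j+1}(W)` members (truncated subtraction). -/
theorem stmt_7 (n k j N : ℕ)
    (u : Fin k → ((Fin n → ℂ) → ℂ))
    (hu : ∀ i, AnalyticAt ℂ (u i) 0) (hu0 : ∀ i, u i 0 = 0)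
    (hsub : ∀ i, fderiv ℂ (u i) 0 ≠ 0)
    (hquasi : ∀ i i' : Fin k, i ≠ i' → ∀ c : ℂ,
      fderiv ℂ (u i) 0 ≠ c • fderiv ℂ (u i') 0)
    (r : Fin N → (Fin k → (ℂ → ℂ)))
    -- each `r m` is an abelian relation of the web:
    (hAR : ∀ m, (∀ i, AnalyticAt ℂ (r m i) 0 ∧ r m i 0 = 0) ∧
        ∀ᶠ x in nhds (0 : Fin n → ℂ), ∑ i, r m i (u i x) = 0)
    -- each `r m` lies in `F^j A(W)`:
    (hFj : ∀ m i, ∀ s ≤ j, iteratedDeriv s (r m i) 0 = 0)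
    -- the family is linearly independent modulo `F^{j+1} A(W)`:
    (hindep : ∀ c : Fin N → ℂ,
        (∀ i, ∀ s ≤ j + 1, iteratedDeriv s (fun t => ∑ m, c m * r m i t) 0 = 0) → c = 0) :
    N ≤ k - Module.finrank ℂ ↥(Submodule.span ℂ
        (Set.range fun i : Fin k => fun v : Fin n → ℂ => (fderiv ℂ (u i) 0 v) ^ (j + 1))) := by
  classical
  -- power series of the r m i
  have hps : ∀ m i, ∃ p : FormalMultilinearSeries ℂ ℂ ℂ, HasFPowerSeriesAt (r m i) p 0 :=
    fun m i => ((hAR m).1 i).1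
  choose p hp using hps
  -- low coefficients vanish
  have hcz : ∀ m i, ∀ s ≤ j, (p m i).coeff s = 0 := by
    intro m i s hs
    have h1 := iteratedDeriv_eq_factorial_mul_coeff (hp m i) s
    rw [hFj m i s hs] at h1
    have h2 : (Nat.factorial s : ℂ) ≠ 0 := by
      exact_mod_cast Nat.factorial_ne_zero s
    rcases mul_eq_zero.1 h1.symm with h | h
    · exact absurd h h2
    · exact h
  set P : Fin k → ((Fin n → ℂ) → ℂ) :=
    fun i => fun v => (fderiv ℂ (u i) 0 v) ^ (j + 1) with hP
  set A : Fin N → Fin k → ℂ := fun m i => (p m i).coeff (j + 1) with hAdef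
  set L := Fintype.linearCombination ℂ P with hL
  -- each A m lies in ker L
  have hker : ∀ m, A m ∈ LinearMap.ker L := by
    intro m
    rw [LinearMap.mem_ker]
    funext v
    have h0 := key_relation u hu hu0 (r m) (p m) (hp m) (hcz m) (hAR m).2 v
    simpa [hL, Fintype.linearCombination_apply, hP, hAdef] using h0
  -- linear independence of the A m
  have hli : LinearIndependent ℂ (fun m => (⟨A m, hker m⟩ : LinearMap.ker L)) := by
    rw [Fintype.linearIndependent_iff]
    intro c hc0
    have hc1 : ∑ m, c m • A m = 0 := by
      have := congrArg (Subtype.val) hc0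
      simpa using this
    have hc2 : ∀ i, ∑ m, c m * A m i = 0 := by
      intro i
      have := congrFun hc1 i
      simpa [Finset.sum_apply] using this
    have hc3 : c = 0 := by
      apply hindep
      intro i s hs
      have hq := hasFPowerSeriesAt_csum c (fun m => r m i) (fun m => p m i)
        (fun m => hp m i)
      have h1 := iteratedDeriv_eq_factorial_mul_coeff hq s
      have hcoeff : (∑ m, c m • p m i).coeff s = ∑ m, c m * (p m i).coeff s := by
        have h4 : (∑ m, c m • p m i) s = ∑ m, c m • (p m i) s := Finset.sum_apply _ _ _
        simp only [FormalMultilinearSeries.coeff, h4, ContinuousMultilinearMap.sum_apply,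
          ContinuousMultilinearMap.smul_apply, smul_eq_mul]
      rw [h1, hcoeff]
      rcases Nat.lt_or_ge s (j + 1) with hlt | hge
      · have : ∀ m, (p m i).coeff s = 0 := fun m => hcz m i s (by omega)
        simp [this]
      · have hseq : s = j + 1 := by omega
        subst hseq
        simp [show ∑ m, c m * (p m i).coeff (j + 1) = 0 from hc2 i]
    intro m
    rw [hc3]; rfl
  -- dimension count
  have hcard : N ≤ Module.finrank ℂ (LinearMap.ker L) := by
    simpa using hli.fintype_card_le_finrank
  have hrank : Module.finrank ℂ (LinearMap.range L) + Module.finrank ℂ (LinearMap.ker L) = k := by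
    rw [L.finrank_range_add_finrank_ker]
    simp [Module.finrank_fintype_fun_eq_card]
  have hrange : LinearMap.range L = Submodule.span ℂ (Set.range P) :=
    Fintype.range_linearCombination ℂ P
  rw [← hrange]
  omega
end

section
/- The space of abelian relations of a quasi-smooth k-web on (ℂⁿ,0) has dimension at most Σ_{j=0}^{k-3} max(0, k − ℓ^{j+1}(W)). If moreover the web is smooth (tangent spaces at 0 in general position), then the rank is at most the Castelnuovo number π(n,k) = Σ_{j=1}^{∞} max(0, k − j(n−1) − 1). -/
open Filter


open Filter Function Topology FormalMultilinearSeries Polynomial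


noncomputable def tcoeff (f : ℂ → ℂ) (m : ℕ) : ℂ := (Function.swap dslope 0)^[m] f 0

theorem tcoeff_eq {f : ℂ → ℂ} {p : FormalMultilinearSeries ℂ ℂ ℂ}
    (hp : HasFPowerSeriesAt f p 0) (m : ℕ) : tcoeff f m = p.coeff m := by
  have h := hp.has_fpower_series_iterate_dslope_fslope m
  have h0 := h.coeff_zero (fun _ => 1)
  have : (fslope^[m] p).coeff 0 = (swap dslope 0)^[m] f 0 := h0
  rw [coeff_iterate_fslope] at this
  simpa [tcoeff] using this.symm

theorem tcoeff_add {f g : ℂ → ℂ} (hf : AnalyticAt ℂ f 0) (hg : AnalyticAt ℂ g 0) (m : ℕ) :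
    tcoeff (fun t => f t + g t) m = tcoeff f m + tcoeff g m := by
  obtain ⟨p, hp⟩ := hf
  obtain ⟨q, hq⟩ := hg
  have h := hp.add hq
  rw [show (fun t => f t + g t) = f + g from rfl]
  rw [tcoeff_eq h, tcoeff_eq hp, tcoeff_eq hq]
  rfl

theorem tcoeff_smul {f : ℂ → ℂ} (hf : AnalyticAt ℂ f 0) (a : ℂ) (m : ℕ) :
    tcoeff (fun t => a * f t) m = a * tcoeff f m := by
  obtain ⟨p, hp⟩ := hf
  have h : HasFPowerSeriesAt (fun t => a * f t) (a • p) 0 := by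
    rw [hasFPowerSeriesAt_iff] at hp ⊢
    filter_upwards [hp] with z hz
    have heq : (fun n => z ^ n • (a • p).coeff n) = fun n => a • (z ^ n • p.coeff n) := by
      funext nn
      show z ^ nn • (a * p.coeff nn) = a • (z ^ nn • p.coeff nn)
      simp only [smul_eq_mul]; ring
    rw [heq]
    simpa only [smul_eq_mul] using hz.const_smul a
  rw [tcoeff_eq h, tcoeff_eq hp]
  rfl

theorem tcoeff_zero_eq (f : ℂ → ℂ) : tcoeff f 0 = f 0 := rfl

theorem eq_pow_mul_iterate_dslope {f : ℂ → ℂ} {p : FormalMultilinearSeries ℂ ℂ ℂ}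
    (hp : HasFPowerSeriesAt f p 0) (m : ℕ) (hc : ∀ e < m, tcoeff f e = 0) :
    ∀ᶠ z in 𝓝 (0:ℂ), f z = z ^ m * (swap dslope 0)^[m] f z := by
  have hq := hasFPowerSeriesAt_iff'.mp (hp.has_fpower_series_iterate_dslope_fslope m)
  filter_upwards [hq, hasFPowerSeriesAt_iff'.mp hp] with x hx1 hx2
  have hc' : ∀ e < m, p.coeff e = 0 := fun e he => (tcoeff_eq hp e) ▸ hc e he
  simp only [sub_zero] at hx1 hx2
  obtain ⟨s, hs1, hs2⟩ := hx2.exists_hasSum_smul_of_apply_eq_zero hc'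
  simp only [coeff_iterate_fslope] at hx1
  have : (swap dslope 0)^[m] f x = s := hx1.unique hs2
  rw [this, ← hs1]
  simp [smul_eq_mul]

theorem eventually_zero_of_tcoeff {f : ℂ → ℂ} (hf : AnalyticAt ℂ f 0)
    (h : ∀ m, tcoeff f m = 0) : ∀ᶠ z in 𝓝 (0:ℂ), f z = 0 := by
  obtain ⟨p, hp⟩ := hf
  have hp0 : p = 0 := by
    ext n : 1
    have := FormalMultilinearSeries.coeff_eq_zero.mp ((tcoeff_eq hp n) ▸ h n)
    rw [this]; rfl
  subst hp0
  exact hp.eventually_eq_zero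


theorem analyticAt_iterate_dslope {f : ℂ → ℂ} (hf : AnalyticAt ℂ f 0) (m : ℕ) :
    AnalyticAt ℂ ((swap dslope 0)^[m] f) 0 := by
  obtain ⟨p, hp⟩ := hf
  exact ⟨_, hp.has_fpower_series_iterate_dslope_fslope m⟩


theorem eq_pow_mul_iterate_dslope' {f : ℂ → ℂ} (hf : AnalyticAt ℂ f 0) (m : ℕ)
    (hc : ∀ e < m, tcoeff f e = 0) :
    ∀ᶠ z in 𝓝 (0:ℂ), f z = z ^ m * (swap dslope 0)^[m] f z := by
  obtain ⟨p, hp⟩ := hf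
  exact eq_pow_mul_iterate_dslope hp m hc

theorem main_step {n k : ℕ} (u : Fin k → ((Fin n → ℂ) → ℂ)) (hu : ∀ i, AnalyticAt ℂ (u i) 0)
    (hu0 : ∀ i, u i 0 = 0) (g : Fin k → ℂ → ℂ) (hg : ∀ i, AnalyticAt ℂ (g i) 0)
    (hrel : ∀ᶠ x in 𝓝 (0 : Fin n → ℂ), ∑ i, g i (u i x) = 0) (m : ℕ)
    (hlow : ∀ i, ∀ e < m, tcoeff (g i) e = 0) (v : Fin n → ℂ) :
    ∑ i, tcoeff (g i) m * ((fderiv ℂ (u i) 0) v) ^ m = 0 := by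
  classical
  set h : Fin k → ℂ → ℂ := fun i => (swap dslope 0)^[m] (g i) with hh
  -- inner curves
  set w : Fin k → ℂ → ℂ := fun i t => u i (t • v) with hw
  have hsmul : Continuous (fun t : ℂ => t • v) := continuous_id.smul continuous_const
  have hten : Tendsto (fun t : ℂ => t • v) (𝓝 0) (𝓝 (0 : Fin n → ℂ)) := by
    have := hsmul.tendsto (0 : ℂ)
    simpa using this
  have hwten : ∀ i, Tendsto (w i) (𝓝 0) (𝓝 (0:ℂ)) := by
    intro i
    have := ((hu i).continuousAt.tendsto).comp hten
    simpa [hw, Function.comp_def, hu0 i] using this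
  have hderiv : ∀ i, HasDerivAt (w i) ((fderiv ℂ (u i) 0) v) 0 := by
    intro i
    have h1 : HasDerivAt (fun t : ℂ => t • v) ((1:ℂ) • v) 0 := (hasDerivAt_id 0).smul_const v
    have h2 : HasFDerivAt (u i) (fderiv ℂ (u i) 0) ((0:ℂ) • v) := by
      rw [zero_smul]; exact (hu i).differentiableAt.hasFDerivAt
    have := h2.comp_hasDerivAt 0 h1
    simpa [hw, Function.comp_def] using this
  have hslope : ∀ i, Tendsto (slope (w i) 0) (𝓝[≠] 0) (𝓝 ((fderiv ℂ (u i) 0) v)) :=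
    fun i => hasDerivAt_iff_tendsto_slope.mp (hderiv i)
  -- the identity pulled back
  have ev1 : ∀ᶠ t in 𝓝 (0:ℂ), ∑ i, g i (w i t) = 0 := hten.eventually hrel
  have ev2 : ∀ i, ∀ᶠ t in 𝓝 (0:ℂ), g i (w i t) = (w i t) ^ m * h i (w i t) :=
    fun i => (hwten i).eventually (eq_pow_mul_iterate_dslope' (hg i) m (hlow i))
  set F : ℂ → ℂ := fun t => ∑ i, (slope (w i) 0 t) ^ m * h i (w i t) with hF
  have evF : ∀ᶠ t in 𝓝[≠] (0:ℂ), F t = 0 := by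
    have ev2' : ∀ᶠ t in 𝓝 (0:ℂ), ∀ i, g i (w i t) = (w i t) ^ m * h i (w i t) :=
      eventually_all.mpr ev2
    filter_upwards [eventually_nhdsWithin_of_eventually_nhds (ev1.and ev2'),
      self_mem_nhdsWithin] with t ht ht0
    have hts : ∀ i, slope (w i) 0 t = (w i t) / t := by
      intro i
      rw [slope_def_field]
      simp [hw, hu0 i]
    have : t ^ m * F t = ∑ i, g i (w i t) := by
      rw [hF, Finset.mul_sum]
      refine Finset.sum_congr rfl fun i _ => ?_
      rw [ht.2 i, hts i, div_pow]
      have ht' : t ≠ 0 := ht0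
      field_simp
    have ht2 : t ^ m * F t = 0 := by rw [this, ht.1]
    have htm : (t:ℂ) ^ m ≠ 0 := pow_ne_zero _ ht0
    exact (mul_eq_zero.mp ht2).resolve_left htm
  have hFten : Tendsto F (𝓝[≠] (0:ℂ)) (𝓝 (∑ i, ((fderiv ℂ (u i) 0) v) ^ m * h i 0)) := by
    apply tendsto_finset_sum
    intro i _
    refine ((hslope i).pow m).mul ?_
    exact ((analyticAt_iterate_dslope (hg i) m).continuousAt.tendsto).comp
      ((hwten i).mono_left nhdsWithin_le_nhds)
  have hzero : Tendsto F (𝓝[≠] (0:ℂ)) (𝓝 0) := by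
    exact Tendsto.congr' (EventuallyEq.symm evF) tendsto_const_nhds
  have : ∑ i, ((fderiv ℂ (u i) 0) v) ^ m * h i 0 = 0 := tendsto_nhds_unique hFten hzero
  rw [← this]
  exact Finset.sum_congr rfl fun i _ => (mul_comm _ _)


theorem reduce_pow {n k : ℕ} (L : Fin k → ((Fin n → ℂ) →L[ℂ] ℂ)) (T : Finset (Fin k))
    (c : Fin k → ℂ) (d : ℕ)
    (H : ∀ x, ∑ i ∈ T, c i * (L i x) ^ (d+1) = 0) (v : Fin n → ℂ) :
    ∀ x, ∑ i ∈ T, (c i * L i v) * (L i x) ^ d = 0 := by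
  intro x
  set p : Polynomial ℂ :=
    ∑ i ∈ T, C (c i) * (C (L i x) + C (L i v) * X) ^ (d+1) with hpdef
  have hp : p = 0 := by
    apply Polynomial.funext
    intro t
    rw [hpdef]
    simp only [eval_finset_sum, eval_mul, eval_pow, eval_add, eval_C, eval_X, eval_zero]
    have := H (x + t • v)
    have hL : ∀ i : Fin k, L i (x + t • v) = L i x + L i v * t := by
      intro i
      rw [map_add, map_smul]
      simp [smul_eq_mul, mul_comm]
    calc ∑ i ∈ T, c i * (L i x + L i v * t) ^ (d+1)
        = ∑ i ∈ T, c i * (L i (x + t • v)) ^ (d+1) := by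
          refine Finset.sum_congr rfl fun i _ => by rw [hL i]
      _ = 0 := H (x + t • v)
  have hD : Polynomial.eval 0 (Polynomial.derivative p) = 0 := by rw [hp]; simp
  rw [hpdef] at hD
  rw [map_sum] at hD
  simp only [derivative_mul, derivative_C, zero_mul, zero_add, derivative_pow,
    derivative_add, derivative_C, derivative_mul, derivative_X, zero_add, mul_one,
    eval_finset_sum, eval_mul, eval_pow, eval_add, eval_C, eval_X, eval_natCast,
    mul_zero, add_zero, eval_zero] at hD
  -- hD should now be: ∑ i ∈ T, c i * ((d+1) * (L i x)^d * L i v) = 0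
  have h2 : (d+1 : ℂ) * ∑ i ∈ T, (c i * L i v) * (L i x) ^ d = 0 := by
    rw [Finset.mul_sum, ← hD]
    refine Finset.sum_congr rfl fun i _ => ?_
    push_cast
    ring
  have : (d+1 : ℂ) ≠ 0 := Nat.cast_add_one_ne_zero d
  exact (mul_eq_zero.mp h2).resolve_left this


theorem pow_indep {n k : ℕ} (L : Fin k → ((Fin n → ℂ) →L[ℂ] ℂ)) (s : ℕ)
    (sep : ∀ (i0 : Fin k) (S : Finset (Fin k)), i0 ∉ S → S.card ≤ s →
      ∃ v, (∀ i ∈ S, L i v = 0) ∧ L i0 v ≠ 0) :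
    ∀ (d : ℕ) (T : Finset (Fin k)) (c : Fin k → ℂ), T.card ≤ d * s + 1 →
      (∀ x, ∑ i ∈ T, c i * (L i x) ^ d = 0) → ∀ i ∈ T, c i = 0 := by
  intro d
  induction d with
  | zero =>
    intro T c hT H i hi
    have hT' : T.card ≤ 1 := by simpa using hT
    have hT1 : T = {i} :=
      Finset.eq_singleton_iff_unique_mem.mpr
        ⟨hi, fun b hb => Finset.card_le_one.mp hT' b hb i hi⟩
    have := H 0
    rw [hT1] at this
    simpa using this
  | succ d ih =>
    intro T c hT H i0 hi0
    obtain ⟨S, hS, hScard⟩ :=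
      Finset.exists_subset_card_eq (s := T.erase i0) (n := min s ((T.erase i0).card)) (min_le_right _ _)
    have hi0S : i0 ∉ S := fun h => (Finset.mem_erase.mp (hS h)).1 rfl
    obtain ⟨v, hv0, hvne⟩ := sep i0 S hi0S (hScard ▸ min_le_left _ _)
    have H' := reduce_pow L T c d H v
    have H'' : ∀ x, ∑ i ∈ T \ S, (c i * L i v) * (L i x) ^ d = 0 := by
      intro x
      rw [← H' x]
      refine Finset.sum_subset Finset.sdiff_subset fun i hiT hiNot => ?_
      have hiS : i ∈ S := by
        by_contra hns
        exact hiNot (Finset.mem_sdiff.mpr ⟨hiT, hns⟩)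
      rw [hv0 i hiS]
      ring
    have hST : S ⊆ T := hS.trans (Finset.erase_subset _ _)
    have hcard : (T \ S).card ≤ d * s + 1 := by
      have he : (T.erase i0).card = T.card - 1 := Finset.card_erase_of_mem hi0
      have h1 : 1 ≤ T.card := Finset.card_pos.mpr ⟨i0, hi0⟩
      have hle : T.card ≤ (d+1) * s + 1 := hT
      rw [add_mul, one_mul] at hle
      rw [Finset.card_sdiff_of_subset hST, hScard, he]
      rcases le_total s (T.card - 1) with h | h
      · rw [min_eq_left h]; omega
      · rw [min_eq_right h]; omega
    have hmem : i0 ∈ T \ S := Finset.mem_sdiff.mpr ⟨hi0, hi0S⟩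
    have := ih (T \ S) (fun i => c i * L i v) hcard H'' i0 hmem
    exact (mul_eq_zero.mp this).resolve_right hvne


-- separation from pairwise non-proportionality
theorem sep_pairwise {n k : ℕ} (L : Fin k → ((Fin n → ℂ) →L[ℂ] ℂ))
    (hsub : ∀ i, L i ≠ 0)
    (hquasi : ∀ i i' : Fin k, i ≠ i' → ∀ c : ℂ, L i ≠ c • L i') :
    ∀ (i0 : Fin k) (S : Finset (Fin k)), i0 ∉ S → S.card ≤ 1 →
      ∃ v, (∀ i ∈ S, L i v = 0) ∧ L i0 v ≠ 0 := by
  intro i0 S hi0 hcard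
  interval_cases h : S.card
  · -- S empty
    rw [Finset.card_eq_zero] at h
    subst h
    have : ∃ v, L i0 v ≠ 0 := by
      by_contra hv
      push_neg at hv
      exact hsub i0 (by ext w; simpa using hv w)
    obtain ⟨v, hv⟩ := this
    exact ⟨v, by simp, hv⟩
  · rw [Finset.card_eq_one] at h
    obtain ⟨i, rfl⟩ := h
    have hne : i0 ≠ i := by simpa using hi0
    by_contra hv
    push_neg at hv
    -- every v with L i v = 0 has L i0 v = 0
    have hker : ∀ v, L i v = 0 → L i0 v = 0 := by
      intro v hvi
      by_contra hne2
      exact hne2 (by simpa using (hv v (by simp [hvi])))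
    -- hence L i0 ∈ span {L i}
    have hspan : (L i0 : (Fin n → ℂ) →ₗ[ℂ] ℂ) ∈
        Submodule.span ℂ (Set.range fun _ : Unit => ((L i : (Fin n → ℂ) →ₗ[ℂ] ℂ))) := by
      apply mem_span_of_iInf_ker_le_ker
      intro v hvmem
      simp only [Submodule.mem_iInf, LinearMap.mem_ker] at hvmem ⊢
      exact hker v (hvmem ())
    rw [Set.range_const, Submodule.mem_span_singleton] at hspan
    obtain ⟨a, ha⟩ := hspan
    apply hquasi i0 i hne a
    apply ContinuousLinearMap.coe_injective
    exact_mod_cast ha.symm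


theorem sep_general {n k : ℕ} (hn : 2 ≤ n) (L : Fin k → ((Fin n → ℂ) →L[ℂ] ℂ))
    (hind : ∀ I : Finset (Fin k), I.card ≤ n → LinearIndependent ℂ (fun i : I => L i.1)) :
    ∀ (i0 : Fin k) (S : Finset (Fin k)), i0 ∉ S → S.card ≤ n - 1 →
      ∃ v, (∀ i ∈ S, L i v = 0) ∧ L i0 v ≠ 0 := by
  intro i0 S hi0 hcard
  by_contra hv
  push_neg at hv
  have hker : ∀ v, (∀ i ∈ S, L i v = 0) → L i0 v = 0 := by
    intro v h
    by_contra hne2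
    exact hne2 (hv v h)
  have hspan : (L i0 : (Fin n → ℂ) →ₗ[ℂ] ℂ) ∈
      Submodule.span ℂ (Set.range fun i : S => ((L i.1 : (Fin n → ℂ) →ₗ[ℂ] ℂ))) := by
    apply mem_span_of_iInf_ker_le_ker
    intro v hvmem
    simp only [Submodule.mem_iInf, LinearMap.mem_ker] at hvmem ⊢
    exact hker v (fun i hi => hvmem ⟨i, hi⟩)
  rw [Submodule.mem_span_range_iff_exists_fun] at hspan
  obtain ⟨cc, hcc⟩ := hspan
  classical
  set c' : Fin k → ℂ := fun j => if h : j ∈ S then cc ⟨j, h⟩ else 0 with hc'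
  have hIcard : (insert i0 S).card ≤ n := by
    rw [Finset.card_insert_of_notMem hi0]
    omega
  have hli := hind (insert i0 S) hIcard
  rw [Fintype.linearIndependent_iff] at hli
  have hsum : ∑ i : (insert i0 S : Finset (Fin k)),
      (if (i : Fin k) = i0 then (-1 : ℂ) else c' i.1) • L i.1 = 0 := by
    rw [Finset.univ_eq_attach,
      Finset.sum_attach (insert i0 S) (fun j => (if j = i0 then (-1:ℂ) else c' j) • L j),
      Finset.sum_insert hi0, if_pos rfl]
    have h1 : ∑ j ∈ S, (if j = i0 then (-1:ℂ) else c' j) • L j = ∑ j ∈ S, c' j • L j :=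
      Finset.sum_congr rfl fun j hj => by rw [if_neg (fun h : j = i0 => hi0 (by rw [← h]; exact hj))]
    have h2 : ∑ j ∈ S, c' j • L j = L i0 := by
      rw [← Finset.sum_attach S (fun j => c' j • L j), ← Finset.univ_eq_attach]
      have h3 : ∀ i : S, c' i.1 • L i.1 = cc i • L i.1 := by
        intro i
        rw [hc']
        simp [i.2]
      rw [Finset.sum_congr rfl (fun i _ => h3 i)]
      apply ContinuousLinearMap.coe_injective
      push_cast
      exact_mod_cast hcc
    rw [h1, h2]
    module
  have hfin := hli _ hsum ⟨i0, Finset.mem_insert_self _ _⟩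
  simp at hfin

/-- (Bol–Chern bound)  Let `W` be a germ of quasi-smooth `k`-web on `(ℂⁿ,0)` given by
holomorphic submersions `u i` with pairwise non-proportional differentials at `0`.
Abelian relations are represented by their primitives: tuples `(g i)` of analytic germs
vanishing at `0` with `∑ i, g i ∘ u i = 0` near `0`.  Then the space of abelian relations
has dimension at most `∑_{j=0}^{k-3} max (0, k - ℓ^{j+1}(W))`: any linearly independent
family of relations has at most that many members.  If moreover the web is smooth (the
differentials at `0` of any `m ≤ n` of the `u i` are linearly independent) and `n ≥ 2`,
then the rank is at most the Castelnuovo number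
`π(n,k) = ∑_{j=0}^{k-3} max (0, k - (j+1)(n-1) - 1)`. -/
theorem stmt_8 (n k N : ℕ)
    (u : Fin k → ((Fin n → ℂ) → ℂ))
    (hu : ∀ i, AnalyticAt ℂ (u i) 0) (hu0 : ∀ i, u i 0 = 0)
    (hsub : ∀ i, fderiv ℂ (u i) 0 ≠ 0)
    (hquasi : ∀ i i' : Fin k, i ≠ i' → ∀ c : ℂ,
      fderiv ℂ (u i) 0 ≠ c • fderiv ℂ (u i') 0)
    (r : Fin N → (Fin k → (ℂ → ℂ)))
    (hAR : ∀ m, (∀ i, AnalyticAt ℂ (r m i) 0 ∧ r m i 0 = 0) ∧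
        ∀ᶠ x in nhds (0 : Fin n → ℂ), ∑ i, r m i (u i x) = 0)
    -- the family of abelian relations is linearly independent (as germs at the origin):
    (hindep : ∀ c : Fin N → ℂ,
        (∀ i, ∀ᶠ t in nhds (0 : ℂ), ∑ m, c m * r m i t = 0) → c = 0) :
    N ≤ ∑ j ∈ Finset.range (k - 2),
        (k - Module.finrank ℂ ↥(Submodule.span ℂ (Set.range fun i : Fin k =>
            fun v : Fin n → ℂ => (fderiv ℂ (u i) 0 v) ^ (j + 1)))) ∧
    (2 ≤ n →
      (∀ I : Finset (Fin k), I.card ≤ n →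
        LinearIndependent ℂ (fun i : I => fderiv ℂ (u i.1) 0)) →
      N ≤ ∑ j ∈ Finset.range (k - 2), (k - ((j + 1) * (n - 1) + 1))) := by
  classical
  have hran : ∀ m i, AnalyticAt ℂ (r m i) 0 := fun m i => ((hAR m).1 i).1
  have hr0 : ∀ m i, r m i 0 = 0 := fun m i => ((hAR m).1 i).2
  set G : (Fin N → ℂ) → Fin k → ℂ → ℂ := fun c i t => ∑ m, c m * r m i t with hG
  have hGan : ∀ c i, AnalyticAt ℂ (G c i) 0 := by
    intro c i
    show AnalyticAt ℂ (fun t => ∑ m, c m * r m i t) 0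
    exact Finset.analyticAt_fun_sum _ (fun m _ => analyticAt_const.mul (hran m i))
  have hG0 : ∀ c i, G c i 0 = 0 := by
    intro c i
    show (∑ m, c m * r m i 0) = 0
    simp [hr0]
  have hGrel : ∀ c, ∀ᶠ x in 𝓝 (0 : Fin n → ℂ), ∑ i, G c i (u i x) = 0 := by
    intro c
    have hall : ∀ᶠ x in 𝓝 (0 : Fin n → ℂ), ∀ m, ∑ i, r m i (u i x) = 0 :=
      eventually_all.mpr (fun m => (hAR m).2)
    filter_upwards [hall] with x hx
    show (∑ i, ∑ m, c m * r m i (u i x)) = 0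
    rw [Finset.sum_comm]
    have : ∀ m, ∑ i, c m * r m i (u i x) = 0 := by
      intro m
      rw [← Finset.mul_sum, hx m, mul_zero]
    simp [this]
  have hGadd : ∀ (c c' : Fin N → ℂ) i e,
      tcoeff (G (c + c') i) e = tcoeff (G c i) e + tcoeff (G c' i) e := by
    intro c c' i e
    have hfe : G (c + c') i = fun t => G c i t + G c' i t := by
      funext t
      show (∑ m, (c m + c' m) * r m i t) = (∑ m, c m * r m i t) + ∑ m, c' m * r m i t
      rw [← Finset.sum_add_distrib]
      exact Finset.sum_congr rfl fun m _ => by ring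
    rw [hfe]
    exact tcoeff_add (hGan c i) (hGan c' i) e
  have hGsmul : ∀ (a : ℂ) (c : Fin N → ℂ) i e,
      tcoeff (G (a • c) i) e = a * tcoeff (G c i) e := by
    intro a c i e
    have hfe : G (a • c) i = fun t => a * G c i t := by
      funext t
      show (∑ m, (a * c m) * r m i t) = a * ∑ m, c m * r m i t
      rw [Finset.mul_sum]
      exact Finset.sum_congr rfl fun m _ => by ring
    rw [hfe]
    exact tcoeff_smul (hGan c i) a e
  have hGzero : ∀ i e, tcoeff (G 0 i) e = 0 := by
    intro i e
    have h0 : G (0 : Fin N → ℂ) i = fun t => (0:ℂ) * G 0 i t := by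
      funext t
      show (∑ m, (0:ℂ) * r m i t) = 0 * ∑ m, (0:ℂ) * r m i t
      simp
    have h1 := tcoeff_smul (hGan 0 i) 0 e
    rw [← h0] at h1
    simpa using h1
  set W : ℕ → Submodule ℂ (Fin N → ℂ) := fun j =>
    { carrier := {c | ∀ i, ∀ e ≤ j, tcoeff (G c i) e = 0}
      add_mem' := by
        intro a b ha hb i e he
        rw [hGadd, ha i e he, hb i e he, add_zero]
      zero_mem' := fun i e _ => hGzero i e
      smul_mem' := by
        intro a c hc i e he
        rw [hGsmul, hc i e he, mul_zero] } with hW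
  have hWmem : ∀ j (c : Fin N → ℂ), c ∈ W j ↔ ∀ i, ∀ e ≤ j, tcoeff (G c i) e = 0 :=
    fun j c => Iff.rfl
  -- the graded-piece kernel property
  have hstep : ∀ (j : ℕ) (c : Fin N → ℂ), (∀ i, ∀ e < j, tcoeff (G c i) e = 0) →
      ∀ v, ∑ i, tcoeff (G c i) j * ((fderiv ℂ (u i) 0) v) ^ j = 0 := by
    intro j c hc v
    exact main_step u hu hu0 (G c) (fun i => hGan c i) (hGrel c) j hc v
  -- W (k-2) is trivial
  have hWbot : W (k - 2) = ⊥ := by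
    rw [Submodule.eq_bot_iff]
    intro c hc
    have hall : ∀ j i, tcoeff (G c i) j = 0 := by
      intro j
      induction j using Nat.strong_induction_on with
      | _ j ih =>
        intro i
        by_cases hj : j ≤ k - 2
        · exact hc i j hj
        · have hm := hstep j c (fun i' e he => ih e he i')
          have hsep := sep_pairwise (fun i => fderiv ℂ (u i) 0) hsub hquasi
          refine pow_indep (fun i => fderiv ℂ (u i) 0) 1 hsep j Finset.univ
            (fun i => tcoeff (G c i) j) ?_ (fun x => hm x) i (Finset.mem_univ i)
          simp only [Finset.card_univ, Fintype.card_fin, mul_one]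
          omega
    have hev : ∀ i, ∀ᶠ t in 𝓝 (0:ℂ), G c i t = 0 :=
      fun i => eventually_zero_of_tcoeff (hGan c i) (fun m => hall m i)
    exact hindep c (fun i => hev i)
  -- dimension counting
  have hdim : ∀ j : ℕ, Module.finrank ℂ (W j) ≤ Module.finrank ℂ (W (j+1)) +
      (k - Module.finrank ℂ ↥(Submodule.span ℂ (Set.range fun i : Fin k =>
            fun v : Fin n → ℂ => (fderiv ℂ (u i) 0 v) ^ (j + 1)))) := by
    intro j
    set pows : Fin k → ((Fin n → ℂ) → ℂ) :=
      fun i : Fin k => fun v : Fin n → ℂ => (fderiv ℂ (u i) 0 v) ^ (j + 1) with hpows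
    set PM : (Fin k → ℂ) →ₗ[ℂ] ((Fin n → ℂ) → ℂ) := Fintype.linearCombination ℂ pows with hPM
    set φ : W j →ₗ[ℂ] (Fin k → ℂ) :=
      { toFun := fun c => fun i => tcoeff (G c.1 i) (j+1)
        map_add' := by
          intro a b
          funext i
          show tcoeff (G (a.1 + b.1) i) (j+1) =
            tcoeff (G a.1 i) (j+1) + tcoeff (G b.1 i) (j+1)
          exact hGadd a.1 b.1 i (j+1)
        map_smul' := by
          intro m c
          funext i
          show tcoeff (G (m • c.1) i) (j+1) = m * tcoeff (G c.1 i) (j+1)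
          exact hGsmul m c.1 i (j+1) } with hφ
    have hWle : W (j+1) ≤ W j := by
      intro c hcm i e he
      exact hcm i e (le_trans he (Nat.le_succ j))
    have hker : LinearMap.ker φ = Submodule.comap (W j).subtype (W (j+1)) := by
      ext c
      rw [LinearMap.mem_ker, Submodule.mem_comap]
      constructor
      · intro h i e he
        rcases Nat.lt_or_ge e (j+1) with h1 | h1
        · exact c.2 i e (Nat.lt_succ_iff.mp h1)
        · have he1 : e = j + 1 := le_antisymm he h1
          subst he1
          have h2 := congrFun h i
          exact h2
      · intro h
        funext i
        exact h i (j+1) le_rfl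
    have hrange : LinearMap.range φ ≤ LinearMap.ker PM := by
      rintro x ⟨c, rfl⟩
      rw [LinearMap.mem_ker]
      show Fintype.linearCombination ℂ pows (fun i => tcoeff (G c.1 i) (j+1)) = 0
      rw [Fintype.linearCombination_apply]
      funext v
      rw [Finset.sum_apply]
      have hv := hstep (j+1) c.1 (fun i e he => c.2 i e (Nat.lt_succ_iff.mp he)) v
      simp only [Pi.zero_apply]
      rw [← hv]
      exact Finset.sum_congr rfl fun i _ => rfl
    have h1 : Module.finrank ℂ (LinearMap.range φ) + Module.finrank ℂ (LinearMap.ker φ)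
        = Module.finrank ℂ (W j) := LinearMap.finrank_range_add_finrank_ker φ
    have h2 : Module.finrank ℂ (LinearMap.ker φ) = Module.finrank ℂ (W (j+1)) := by
      rw [hker]
      exact LinearEquiv.finrank_eq (Submodule.comapSubtypeEquivOfLe hWle)
    have h3 : Module.finrank ℂ (LinearMap.range φ) ≤ Module.finrank ℂ (LinearMap.ker PM) :=
      Submodule.finrank_mono hrange
    have h4 : Module.finrank ℂ (LinearMap.range PM) + Module.finrank ℂ (LinearMap.ker PM)
        = k := by
      rw [LinearMap.finrank_range_add_finrank_ker PM, Module.finrank_fin_fun]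
    have h5 : LinearMap.range PM = Submodule.span ℂ (Set.range pows) := by
      rw [hPM]
      exact Fintype.range_linearCombination ℂ pows
    rw [h5] at h4
    omega
  -- telescoping
  have hchain : ∀ d : ℕ, N ≤ Module.finrank ℂ (W d) +
      ∑ j ∈ Finset.range d, (k - Module.finrank ℂ ↥(Submodule.span ℂ
        (Set.range fun i : Fin k =>
            fun v : Fin n → ℂ => (fderiv ℂ (u i) 0 v) ^ (j + 1)))) := by
    intro d
    induction d with
    | zero =>
      have hWtop : W 0 = ⊤ := by
        rw [Submodule.eq_top_iff']
        intro c i e he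
        have he0 : e = 0 := Nat.le_zero.mp he
        subst he0
        rw [tcoeff_zero_eq, hG0]
      rw [hWtop]
      simp [finrank_top, Module.finrank_fin_fun]
    | succ d ih =>
      refine le_trans ih ?_
      rw [Finset.sum_range_succ]
      have := hdim d
      omega
  have part1 : N ≤ ∑ j ∈ Finset.range (k - 2),
      (k - Module.finrank ℂ ↥(Submodule.span ℂ (Set.range fun i : Fin k =>
          fun v : Fin n → ℂ => (fderiv ℂ (u i) 0 v) ^ (j + 1)))) := by
    have := hchain (k - 2)
    rw [hWbot] at this
    simpa [finrank_bot] using this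
  refine ⟨part1, fun hn hsmooth => ?_⟩
  refine le_trans part1 (Finset.sum_le_sum fun j _ => ?_)
  -- termwise bound via general position
  set pows : Fin k → ((Fin n → ℂ) → ℂ) :=
    fun i : Fin k => fun v : Fin n → ℂ => (fderiv ℂ (u i) 0 v) ^ (j + 1) with hpows
  haveI : FiniteDimensional ℂ (Submodule.span ℂ (Set.range pows)) :=
    FiniteDimensional.span_of_finite ℂ (Set.finite_range pows)
  have hmin : min k ((j+1) * (n-1) + 1) ≤
      Module.finrank ℂ (Submodule.span ℂ (Set.range pows)) := by
    obtain ⟨T, hTsub, hTcard⟩ := Finset.exists_subset_card_eq (s := (Finset.univ : Finset (Fin k)))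
      (n := min k ((j+1) * (n-1) + 1))
      (by simp only [Finset.card_univ, Fintype.card_fin]; exact min_le_left _ _)
    have hli : LinearIndependent ℂ (fun i : T => pows i.1) := by
      rw [Fintype.linearIndependent_iff]
      intro g hg
      set c : Fin k → ℂ := fun i => if h : i ∈ T then g ⟨i, h⟩ else 0 with hcdef
      have hzero : ∀ x, ∑ i ∈ T, c i * (fderiv ℂ (u i) 0 x) ^ (j+1) = 0 := by
        intro x
        have hx := congrFun hg x
        rw [Finset.sum_apply] at hx
        have hx' : ∑ i : T, g i * (fderiv ℂ (u i.1) 0 x) ^ (j+1) = 0 := by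
          have h00 : (0 : (Fin n → ℂ) → ℂ) x = 0 := rfl
          rw [← h00, ← hx]
          exact Finset.sum_congr rfl fun i _ => rfl
        calc ∑ i ∈ T, c i * (fderiv ℂ (u i) 0 x) ^ (j+1)
            = ∑ i ∈ T.attach, c i.1 * (fderiv ℂ (u i.1) 0 x) ^ (j+1) :=
              (Finset.sum_attach T (fun i => c i * (fderiv ℂ (u i) 0 x) ^ (j+1))).symm
          _ = ∑ i : T, g i * (fderiv ℂ (u i.1) 0 x) ^ (j+1) := by
              rw [← Finset.univ_eq_attach]
              refine Finset.sum_congr rfl fun i _ => ?_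
              congr 1
              rw [hcdef]
              exact dif_pos i.2
          _ = 0 := hx'
      have hc0 := pow_indep (fun i => fderiv ℂ (u i) 0) (n-1)
        (sep_general hn (fun i => fderiv ℂ (u i) 0) hsmooth) (j+1) T c
        (by rw [hTcard]; exact min_le_right _ _) hzero
      intro i
      have hci := hc0 i.1 i.2
      rw [hcdef] at hci
      simpa [i.2] using hci
    have h5 : Module.finrank ℂ (Submodule.span ℂ (Set.range fun i : T => pows i.1))
        = T.card := by
      rw [finrank_span_eq_card hli, Fintype.card_coe]
    have h6 : Submodule.span ℂ (Set.range fun i : T => pows i.1) ≤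
        Submodule.span ℂ (Set.range pows) :=
      Submodule.span_mono (by rintro x ⟨i, rfl⟩; exact ⟨i.1, rfl⟩)
    calc min k ((j+1) * (n-1) + 1) = T.card := hTcard.symm
      _ ≤ _ := h5 ▸ Submodule.finrank_mono h6
  rcases le_total k ((j+1) * (n-1) + 1) with h | h
  · rw [min_eq_left h] at hmin
    omega
  · rw [min_eq_right h] at hmin
    omega
end

section
/- With ρ = ⌊(k−n−1)/(n−1)⌋ and ε the remainder of the division of k−n−1 by n−1 (assuming k ≥ n+1), the Castelnuovo number admits the presentation π(n,k) = (ε+1)·C(ρ+2,2) + (n−2−ε)·C(ρ+1,2). -/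
lemma castelnuovo_aux (m ε t : ℕ) (hm : m = ε + 1 + t) :
    ∀ ρ, ∑ j ∈ Finset.range (ρ + 1), (ρ * m + ε + 1 - j * m)
      = (ε + 1) * Nat.choose (ρ + 2) 2 + t * Nat.choose (ρ + 1) 2 := by
  intro ρ
  induction ρ with
  | zero => simp
  | succ ρ ih =>
    have hshift : ∀ j : ℕ, (ρ + 1) * m + ε + 1 - (j + 1) * m = ρ * m + ε + 1 - j * m := by
      intro j
      have h1 : (ρ + 1) * m = ρ * m + m := by ring
      have h2 : (j + 1) * m = j * m + m := by ring
      omega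
    rw [Finset.sum_range_succ']
    simp only [hshift]
    rw [ih]
    have c2 : Nat.choose (ρ + 2) 2 = Nat.choose (ρ + 1) 2 + (ρ + 1) := by
      rw [Nat.choose_succ_succ]
      simp [Nat.choose_one_right]
      omega
    have c3 : Nat.choose (ρ + 3) 2 = Nat.choose (ρ + 1) 2 + (ρ + 1) + (ρ + 2) := by
      rw [show ρ + 3 = (ρ + 2) + 1 by ring, Nat.choose_succ_succ, c2]
      simp [Nat.choose_one_right]
      omega
    rw [c2, c3, hm]
    simp only [Nat.zero_mul, Nat.sub_zero]
    ring

/-- Alternative closed formula for the Castelnuovo number.  For `k ≥ n+1`, let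
`ρ = ⌊(k-n-1)/(n-1)⌋` and `ε` be the remainder of the division of `k-n-1` by `n-1`.  Then
`π(n,k) = ∑_{j ≥ 1} max (0, k - j(n-1) - 1) = (ε+1)·C(ρ+2,2) + (n-2-ε)·C(ρ+1,2)`.
The infinite sum is expressed by truncating at any `M ≥ k` (all further terms vanish);
subtraction of naturals is truncated. -/
theorem stmt_10 (n k : ℕ) (hn : 2 ≤ n) (hk : n + 1 ≤ k) :
    ∀ M : ℕ, k ≤ M →
      (∑ j ∈ Finset.range M, (k - ((j + 1) * (n - 1) + 1)))
        = ((k - n - 1) % (n - 1) + 1) * Nat.choose ((k - n - 1) / (n - 1) + 2) 2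
          + (n - 2 - (k - n - 1) % (n - 1)) * Nat.choose ((k - n - 1) / (n - 1) + 1) 2 := by
  intro M hM
  set m := n - 1 with hmdef
  set d := k - n - 1 with hddef
  have hm1 : 1 ≤ m := by omega
  have hkd : k = d + m + 2 := by omega
  set ρ := d / m with hρ
  set ε := d % m with hε
  have hεm : ε < m := Nat.mod_lt _ hm1
  have hdρε : d = ρ * m + ε := by
    rw [hρ, hε, Nat.mul_comm]
    exact (Nat.div_add_mod d m).symm
  obtain ⟨t, ht⟩ : ∃ t, m = ε + 1 + t := ⟨m - ε - 1, by omega⟩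
  have hn2 : n - 2 - ε = t := by omega
  have hρM : ρ + 1 ≤ M := by
    have : ρ ≤ d := Nat.div_le_self d m
    omega
  have hterm : ∀ j : ℕ, k - ((j + 1) * m + 1) = ρ * m + ε + 1 - j * m := by
    intro j
    have h2 : (j + 1) * m = j * m + m := by ring
    omega
  have hzero : ∀ j : ℕ, ρ + 1 ≤ j → k - ((j + 1) * m + 1) = 0 := by
    intro j hj
    have h1 : (ρ + 1) * m ≤ j * m := Nat.mul_le_mul_right m hj
    have h2 : (ρ + 1) * m = ρ * m + m := by ring
    have h3 : (j + 1) * m = j * m + m := by ring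
    omega
  have hsub : ∑ j ∈ Finset.range M, (k - ((j + 1) * m + 1))
      = ∑ j ∈ Finset.range (ρ + 1), (k - ((j + 1) * m + 1)) := by
    symm
    apply Finset.sum_subset
    · exact Finset.range_subset_range.2 hρM
    · intro j _ hj
      exact hzero j (by simpa using Finset.mem_range.not.1 hj |> Nat.le_of_not_lt)
  rw [hsub, hn2]
  calc ∑ j ∈ Finset.range (ρ + 1), (k - ((j + 1) * m + 1))
      = ∑ j ∈ Finset.range (ρ + 1), (ρ * m + ε + 1 - j * m) :=
        Finset.sum_congr rfl (fun j _ => hterm j)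
    _ = (ε + 1) * Nat.choose (ρ + 2) 2 + t * Nat.choose (ρ + 1) 2 :=
        castelnuovo_aux m ε t ht ρ
end

section
/- (Castelnuovo Lemma) Let n ≥ 2 and k ≥ 2n+3. If P ⊂ ℙⁿ is a set of k points in general position that imposes only 2n+1 conditions on the linear system of quadrics, then P is contained in a rational normal curve of degree n. -/
open Module Submodule

namespace Cast13



/-- entrywise dot product -/
noncomputable def dotp {d : ℕ} (a b : Fin d → ℂ) : ℂ := ∑ i, a i * b i

/-- rank-one symmetric "matrix" of a vector -/
noncomputable def ver2 {d : ℕ} (v : Fin d → ℂ) : Fin d → Fin d → ℂ := fun i j => v i * v j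

lemma ver2_smul {d : ℕ} (c : ℂ) (v : Fin d → ℂ) : ver2 (c • v) = (c * c) • ver2 v := by
  funext i j
  simp [ver2, Pi.smul_apply, smul_eq_mul]
  ring

/-- A vector space over an infinite field is not a finite union of proper subspaces. -/
lemma exists_not_mem_of_proper {W : Type*} [AddCommGroup W] [Module ℂ W]
    {ι : Type*} (s : Finset ι) (U : ι → Submodule ℂ W) (hU : ∀ i ∈ s, U i ≠ ⊤) :
    ∃ w : W, ∀ i ∈ s, w ∉ U i := by
  classical
  induction s using Finset.induction_on with
  | empty => exact ⟨0, by simp⟩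
  | @insert i₀ s hi₀ ih =>
    obtain ⟨x, hx⟩ := ih (fun i hi => hU i (Finset.mem_insert_of_mem hi))
    have hU₀ : U i₀ ≠ ⊤ := hU i₀ (Finset.mem_insert_self _ _)
    obtain ⟨u, hu⟩ : ∃ u, u ∉ U i₀ := by
      by_contra h
      push_neg at h
      exact hU₀ (eq_top_iff.2 fun y _ => h y)
    -- for each subspace, at most one `t` with `x + t • u` inside it
    have key : ∀ i ∈ insert i₀ s, {t : ℂ | x + t • u ∈ U i}.Subsingleton := by
      intro i hi t₁ ht₁ t₂ ht₂
      by_contra hne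
      have hmem : (t₁ - t₂) • u ∈ U i := by
        have := Submodule.sub_mem (U i) ht₁ ht₂
        simpa [add_sub_add_left_eq_sub, ← sub_smul] using this
      have huU : u ∈ U i := by
        have h1 : (t₁ - t₂)⁻¹ • ((t₁ - t₂) • u) ∈ U i := Submodule.smul_mem _ _ hmem
        rwa [smul_smul, inv_mul_cancel₀ (sub_ne_zero.2 hne), one_smul] at h1
      rcases Finset.mem_insert.1 hi with rfl | hi
      · exact hu huU
      · have hxU : x ∈ U i := by
          have := Submodule.sub_mem (U i) ht₁ (Submodule.smul_mem _ t₁ huU)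
          simpa using this
        exact hx i hi hxU
    have hfin : ({t : ℂ | ∃ i ∈ insert i₀ s, x + t • u ∈ U i}).Finite := by
      have : {t : ℂ | ∃ i ∈ insert i₀ s, x + t • u ∈ U i}
          = ⋃ i ∈ insert i₀ s, {t : ℂ | x + t • u ∈ U i} := by
        ext t; simp
      rw [this]
      exact Set.Finite.biUnion (Finset.finite_toSet _)
        (fun i hi => Set.Subsingleton.finite (key i hi))
    obtain ⟨t, ht⟩ := (Set.Infinite.nonempty (Set.Finite.infinite_compl hfin))
    refine ⟨x + t • u, fun i hi hmem => ht ⟨i, hi, hmem⟩⟩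

/-- Vandermonde solve: if `∑ j, c j * x r ^ j = 0` for distinct `x r`, then `c = 0`. -/
lemma vandermonde_solve {d : ℕ} (x : Fin d → ℂ) (hx : Function.Injective x)
    (c : Fin d → ℂ) (h : ∀ r, ∑ j : Fin d, c j * x r ^ (j : ℕ) = 0) : c = 0 := by
  have hdet : IsUnit (Matrix.vandermonde x).det := by
    rw [Matrix.det_vandermonde]
    apply IsUnit.mk0
    apply Finset.prod_ne_zero_iff.2
    intro i _
    apply Finset.prod_ne_zero_iff.2
    intro j hj
    have hij : i < j := Finset.mem_Ioi.1 hj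
    exact sub_ne_zero.2 (fun hEq => absurd (hx hEq) hij.ne')
  have hmv : (Matrix.vandermonde x).mulVec c = 0 := by
    funext r
    simpa [Matrix.mulVec, Matrix.vandermonde, dotProduct, mul_comm] using h r
  have := congrArg (fun v => (Matrix.vandermonde x)⁻¹.mulVec v) hmv
  simpa [Matrix.mulVec_mulVec, Matrix.nonsing_inv_mul _ hdet] using this






/-- the dot-product functional -/
noncomputable def dotL {d : ℕ} (a : Fin d → ℂ) : (Fin d → ℂ) →ₗ[ℂ] ℂ where
  toFun v := dotp a v
  map_add' x y := by simp [dotp, mul_add, Finset.sum_add_distrib]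
  map_smul' c x := by
    simp only [dotp, Pi.smul_apply, smul_eq_mul, RingHom.id_apply, Finset.mul_sum]
    exact Finset.sum_congr rfl fun i _ => by ring

lemma dotp_single {d : ℕ} (a : Fin d → ℂ) (i : Fin d) :
    dotp a (Pi.single i 1) = a i := by
  simp [dotp, Pi.single_apply, mul_ite, Finset.sum_ite_eq']

/-- a vector dot-orthogonal to a full independent family vanishes -/
lemma eq_zero_of_dotp_indep {d : ℕ} {ι : Type*} [Fintype ι] (hcard : Fintype.card ι = d)
    (v : ι → Fin d → ℂ) (hv : LinearIndependent ℂ v) (w : Fin d → ℂ)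
    (hw : ∀ r, dotp w (v r) = 0) : w = 0 := by
  have hsp : span ℂ (Set.range v) = ⊤ := by
    apply Submodule.eq_top_of_finrank_eq
    rw [finrank_span_eq_card hv, hcard, Module.finrank_fin_fun]
  have hzero : ∀ x : Fin d → ℂ, dotL w x = 0 := by
    intro x
    have hx : x ∈ span ℂ (Set.range v) := by rw [hsp]; trivial
    induction hx using Submodule.span_induction with
    | mem x hx => obtain ⟨r, rfl⟩ := hx; exact hw r
    | zero => simp
    | add x y _ _ hx hy => simp [map_add, hx, hy]
    | smul c x _ hx => simp [map_smul, hx]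
  funext i
  have h' : dotp w (Pi.single i 1) = 0 := hzero (Pi.single i 1)
  simpa [dotp_single] using h'

/-- quadratic functional from two vectors -/
noncomputable def quadL {d : ℕ} (a b : Fin d → ℂ) : (Fin d → Fin d → ℂ) →ₗ[ℂ] ℂ where
  toFun A := ∑ i, ∑ j, a i * b j * A i j
  map_add' x y := by
    simp only [Pi.add_apply, mul_add]
    rw [← Finset.sum_add_distrib]
    congr 1; funext i
    rw [← Finset.sum_add_distrib]
  map_smul' c x := by
    simp only [Pi.smul_apply, smul_eq_mul, RingHom.id_apply, Finset.mul_sum]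
    congr 1; funext i
    exact Finset.sum_congr rfl fun j _ => by ring

lemma quadL_ver2 {d : ℕ} (a b v : Fin d → ℂ) :
    quadL a b (ver2 v) = dotp a v * dotp b v := by
  simp only [quadL, ver2, LinearMap.coe_mk, AddHom.coe_mk, dotp, Finset.sum_mul_sum]
  congr 1; funext i
  congr 1; funext j
  ring


lemma dotp_of_functional {d : ℕ} (ℓ : (Fin d → ℂ) →ₗ[ℂ] ℂ) (v : Fin d → ℂ) :
    dotp (fun i => ℓ (Pi.single i 1)) v = ℓ v := by
  conv_rhs => rw [LinearMap.pi_apply_eq_sum_univ ℓ v]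
  apply Finset.sum_congr rfl
  intro i _
  have : (Pi.single i (1:ℂ)) = (fun j => if i = j then (1:ℂ) else 0) := by
    funext j
    simp [Pi.single_apply, eq_comm]
  show ℓ (Pi.single i 1) * v i = v i • ℓ fun j => if i = j then 1 else 0
  rw [this, mul_comm, smul_eq_mul]

section GP
variable {n k : ℕ} {p : Fin k → Fin (n+1) → ℂ}
  (hgen : ∀ I : Finset (Fin k), I.card ≤ n + 1 → LinearIndependent ℂ (fun i : I => p i.1))

include hgen in
lemma li_of_inj {ι : Type*} [Fintype ι] (g : ι → Fin k) (hg : Function.Injective g)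
    (hcard : Fintype.card ι ≤ n + 1) : LinearIndependent ℂ (p ∘ g) := by
  classical
  set I : Finset (Fin k) := Finset.univ.image g with hI
  have hIcard : I.card ≤ n + 1 := by
    rw [hI, Finset.card_image_of_injective _ hg, Finset.card_univ]
    exact hcard
  have hli := hgen I hIcard
  have he : Function.Injective (fun j : ι => (⟨g j, by simp [hI]⟩ : I)) := by
    intro a b hab
    exact hg (congrArg Subtype.val hab)
  exact hli.comp _ he

include hgen in
/-- a functional separating one point from ≤ n others -/
lemma exists_separating {ι : Type*} [Fintype ι] [DecidableEq ι] (g : ι → Fin k)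
    (hg : Function.Injective g) (B : Finset ι) (hB : B.card ≤ n) (r₀ : ι) (hr₀ : r₀ ∉ B) :
    ∃ a : Fin (n+1) → ℂ, (∀ b ∈ B, dotp a (p (g b)) = 0) ∧ dotp a (p (g r₀)) ≠ 0 := by
  classical
  -- the family on the subtype of `insert r₀ B`
  set J : Finset ι := insert r₀ B with hJ
  have hJcard : Fintype.card J ≤ n + 1 := by
    simp only [Fintype.card_coe, hJ]
    calc (insert r₀ B).card ≤ B.card + 1 := Finset.card_insert_le _ _
      _ ≤ n + 1 := by omega
  have hw : LinearIndependent ℂ (p ∘ (g ∘ (Subtype.val : J → ι))) :=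
    li_of_inj hgen _ (hg.comp Subtype.val_injective) hJcard
  set w : J → Fin (n+1) → ℂ := p ∘ (g ∘ (Subtype.val : J → ι)) with hwdef
  have hr₀J : r₀ ∈ J := Finset.mem_insert_self _ _
  set i₀ : J := ⟨r₀, hr₀J⟩ with hi₀
  set s : Set J := {x : J | x.1 ∈ B} with hs
  have hi₀s : i₀ ∉ s := by simp [hs, hi₀, hr₀]
  have hnm : w i₀ ∉ span ℂ (w '' s) := hw.notMem_span_image hi₀s
  have himg : w '' s = (fun b => p (g b)) '' (B : Set ι) := by
    ext y
    constructor
    · rintro ⟨⟨x, hxJ⟩, hxs, rfl⟩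
      exact ⟨x, hxs, rfl⟩
    · rintro ⟨b, hb, rfl⟩
      exact ⟨⟨b, Finset.mem_insert_of_mem hb⟩, hb, rfl⟩
  rw [himg] at hnm
  -- build functional via quotient
  set W := span ℂ ((fun b => p (g b)) '' (B : Set ι)) with hW
  have hπ : W.mkQ (p (g r₀)) ≠ 0 := by
    have h' : p (g r₀) ∉ W := hnm
    simpa [Submodule.Quotient.mk_eq_zero] using h'
  obtain ⟨f, hf⟩ : ∃ f : Module.Dual ℂ ((Fin (n+1) → ℂ) ⧸ W), f (W.mkQ (p (g r₀))) ≠ 0 := by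
    by_contra h
    push_neg at h
    exact hπ ((Module.forall_dual_apply_eq_zero_iff ℂ _).1 h)
  set ℓ : (Fin (n+1) → ℂ) →ₗ[ℂ] ℂ := f ∘ₗ W.mkQ with hℓ
  refine ⟨fun i => ℓ (Pi.single i 1), ?_, ?_⟩
  · intro b hb
    have hmem : p (g b) ∈ W := subset_span ⟨b, hb, rfl⟩
    have : ℓ (p (g b)) = 0 := by
      simp [hℓ, (Submodule.Quotient.mk_eq_zero W).2 hmem]
    rw [← this, dotp_of_functional]
  · rw [dotp_of_functional]
    exact hf
end GP

section GP2
variable {n k : ℕ} {p : Fin k → Fin (n+1) → ℂ}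
  (hgen : ∀ I : Finset (Fin k), I.card ≤ n + 1 → LinearIndependent ℂ (fun i : I => p i.1))

include hgen in
/-- Lemma B : the `ver2` of at most `2n+1` of the points are linearly independent. -/
lemma ver2_li {ι : Type*} [Fintype ι] [DecidableEq ι] (g : ι → Fin k)
    (hg : Function.Injective g) (hcard : Fintype.card ι ≤ 2*n + 1) :
    LinearIndependent ℂ (fun r : ι => ver2 (p (g r))) := by
  rw [Fintype.linearIndependent_iff]
  intro c hc r₀
  set A : Finset ι := Finset.univ.erase r₀ with hA
  have hAcard : A.card ≤ 2*n := by
    rw [hA, Finset.card_erase_of_mem (Finset.mem_univ _), Finset.card_univ]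
    omega
  obtain ⟨T, hTA, hTcard⟩ := Finset.exists_subset_card_eq (min_le_right n A.card)
  set S₂ : Finset ι := A \ T with hS₂
  have hS₂card : S₂.card ≤ n := by
    rw [hS₂, Finset.card_sdiff_of_subset hTA, hTcard]
    omega
  have hr₀T : r₀ ∉ T := fun h => (Finset.ne_of_mem_erase (hTA h)) rfl
  have hr₀S₂ : r₀ ∉ S₂ := fun h => (Finset.ne_of_mem_erase (Finset.mem_sdiff.1 h).1) rfl
  obtain ⟨a, haT, har₀⟩ := exists_separating hgen g hg T (hTcard ▸ min_le_left _ _) r₀ hr₀T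
  obtain ⟨b, hbS₂, hbr₀⟩ := exists_separating hgen g hg S₂ hS₂card r₀ hr₀S₂
  have happ := congrArg (quadL a b) hc
  rw [map_sum, map_zero] at happ
  have hterm : ∀ r : ι, quadL a b (c r • ver2 (p (g r)))
      = c r * (dotp a (p (g r)) * dotp b (p (g r))) := by
    intro r
    rw [map_smul, quadL_ver2, smul_eq_mul]
  rw [Finset.sum_congr rfl (fun r _ => hterm r)] at happ
  have hzero : ∀ r ∈ Finset.univ, r ≠ r₀ → c r * (dotp a (p (g r)) * dotp b (p (g r))) = 0 := by
    intro r _ hr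
    have hrA : r ∈ A := Finset.mem_erase.2 ⟨hr, Finset.mem_univ _⟩
    by_cases hrT : r ∈ T
    · rw [haT r hrT]; ring
    · have : r ∈ S₂ := Finset.mem_sdiff.2 ⟨hrA, hrT⟩
      rw [hbS₂ r this]; ring
  rw [Finset.sum_eq_single r₀ hzero (fun h => absurd (Finset.mem_univ r₀) h)] at happ
  rcases mul_eq_zero.1 happ with h | h
  · exact h
  · exact absurd h (mul_ne_zero har₀ hbr₀)
end GP2

/-- self-duality of `Fin d → ℂ` via the dot product -/
noncomputable def toDualPi (d : ℕ) : (Fin d → ℂ) ≃ₗ[ℂ] Module.Dual ℂ (Fin d → ℂ) := by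
  refine LinearEquiv.ofBijective
    { toFun := fun v => dotL v
      map_add' := fun a b => by
        apply LinearMap.ext; intro x
        simp [dotL, dotp, add_mul, Finset.sum_add_distrib]
      map_smul' := fun c a => by
        apply LinearMap.ext; intro x
        simp only [dotL, dotp, LinearMap.coe_mk, AddHom.coe_mk, RingHom.id_apply,
          LinearMap.smul_apply, smul_eq_mul, Finset.mul_sum, Pi.smul_apply]
        exact Finset.sum_congr rfl fun i _ => by ring }
    ⟨?_, ?_⟩
  · rw [injective_iff_map_eq_zero]
    intro v hv
    funext i
    have := congrArg (fun f : Module.Dual ℂ (Fin d → ℂ) => f (Pi.single i 1)) hv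
    have h' : dotp v (Pi.single i 1) = 0 := this
    simpa [dotp_single] using h'
  · intro f
    refine ⟨fun i => f (Pi.single i 1), ?_⟩
    apply LinearMap.ext; intro x
    show dotL _ x = f x
    show dotp _ x = f x
    conv_rhs => rw [LinearMap.pi_apply_eq_sum_univ f x]
    apply Finset.sum_congr rfl
    intro i _
    have h1 : (Pi.single i (1:ℂ)) = (fun j => if i = j then (1:ℂ) else 0) := by
      funext j; simp [Pi.single_apply, eq_comm]
    show f (Pi.single i 1) * x i = x i • f fun j => if i = j then 1 else 0
    rw [h1, mul_comm, smul_eq_mul]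

lemma toDualPi_apply {d : ℕ} (v x : Fin d → ℂ) : toDualPi d v x = dotp v x := rfl

section Step1
variable {n k : ℕ} (p : Fin k → Fin (n+1) → ℂ)

/-- Step 1: the codimension condition bounds the span of the rank-one matrices. -/
lemma span_ver2_le
    (hcond : Module.finrank ℂ ↥(MvPolynomial.homogeneousSubmodule (Fin (n + 1)) ℂ 2)
      = Module.finrank ℂ ↥((MvPolynomial.homogeneousSubmodule (Fin (n + 1)) ℂ 2) ⊓
          ⨅ i : Fin k, LinearMap.ker (MvPolynomial.aeval (R := ℂ) (p i)).toLinearMap)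
        + (2 * n + 1)) :
    Module.finrank ℂ ↥(LinearMap.range (Fintype.linearCombination ℂ (fun r : Fin k => ver2 (p r))))
      ≤ 2 * n + 1 := by
  classical
  set H2 := MvPolynomial.homogeneousSubmodule (Fin (n + 1)) ℂ 2 with hH2
  set K := ⨅ i : Fin k, LinearMap.ker (MvPolynomial.aeval (R := ℂ) (p i)).toLinearMap with hK
  have hle : H2 ≤ MvPolynomial.restrictTotalDegree (Fin (n+1)) ℂ 2 := by
    intro q hq
    rw [MvPolynomial.mem_restrictTotalDegree]
    exact MvPolynomial.IsHomogeneous.totalDegree_le ((MvPolynomial.mem_homogeneousSubmodule _ _).1 hq)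
  haveI : FiniteDimensional ℂ ↥H2 := Submodule.finiteDimensional_of_le hle
  set Ψ : ↥H2 →ₗ[ℂ] (Fin k → ℂ) :=
    LinearMap.pi (fun r => (MvPolynomial.aeval (R := ℂ) (p r)).toLinearMap ∘ₗ H2.subtype) with hΨ
  have hkerΨ : LinearMap.ker Ψ = comap H2.subtype K := by
    ext q
    simp [hΨ, LinearMap.mem_ker, funext_iff, Submodule.mem_comap, hK, Submodule.mem_iInf,
      LinearMap.pi_apply]
  have hrankΨ : Module.finrank ℂ ↥(LinearMap.range Ψ) = 2*n + 1 := by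
    have hrn := LinearMap.finrank_range_add_finrank_ker Ψ
    have he : Module.finrank ℂ ↥(LinearMap.ker Ψ) = Module.finrank ℂ ↥(H2 ⊓ K) := by
      rw [hkerΨ]
      have : comap H2.subtype (H2 ⊓ K) = comap H2.subtype K := by
        rw [Submodule.comap_inf, Submodule.comap_subtype_self, top_inf_eq]
      rw [← this]
      exact LinearEquiv.finrank_eq (Submodule.comapSubtypeEquivOfLe inf_le_left)
    rw [he] at hrn
    omega
  -- dualize
  set R := LinearMap.range Ψ with hR
  set W := R.map (toDualPi k).toLinearMap with hW
  have hWrank : Module.finrank ℂ ↥W = 2*n+1 := by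
    rw [hW, LinearEquiv.finrank_map_eq]
    exact hrankΨ
  have hdim := Subspace.finrank_add_finrank_dualCoannihilator_eq W
  set Ω := W.dualCoannihilator with hΩ
  -- Ω is inside the kernel of the linear-combination map
  have hΩker : Ω ≤ LinearMap.ker (Fintype.linearCombination ℂ (fun r : Fin k => ver2 (p r))) := by
    intro c hc
    rw [LinearMap.mem_ker, Fintype.linearCombination_apply]
    funext i j
    have hq : (MvPolynomial.X i * MvPolynomial.X j : MvPolynomial (Fin (n+1)) ℂ) ∈ H2 := by
      rw [hH2, MvPolynomial.mem_homogeneousSubmodule]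
      simpa using (MvPolynomial.isHomogeneous_X ℂ i).mul (MvPolynomial.isHomogeneous_X ℂ j)
    have hfW : (toDualPi k) (Ψ ⟨_, hq⟩) ∈ W := by
      exact Submodule.mem_map_of_mem (LinearMap.mem_range_self _ _)
    have h0 := ((Submodule.mem_dualCoannihilator _).1 hc) _ hfW
    rw [toDualPi_apply] at h0
    have hΨval : Ψ ⟨_, hq⟩ = fun r => p r i * p r j := by
      funext r
      simp [hΨ, LinearMap.pi_apply, MvPolynomial.aeval_X]
    rw [hΨval] at h0
    simp only [dotp] at h0
    calc (∑ r, c r • ver2 (p r)) i j = ∑ r, c r * (p r i * p r j) := by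
          simp [ver2, Finset.sum_apply]
      _ = ∑ r, (p r i * p r j) * c r := by
          exact Finset.sum_congr rfl fun r _ => by ring
      _ = 0 := h0
  -- conclude
  have hrn2 := LinearMap.finrank_range_add_finrank_ker
    (Fintype.linearCombination ℂ (fun r : Fin k => ver2 (p r)))
  have hmono := Submodule.finrank_mono hΩker
  have hfinpi : Module.finrank ℂ (Fin k → ℂ) = k := Module.finrank_fin_fun ℂ
  omega
end Step1




section Core
variable {n k : ℕ} {p : Fin k → Fin (n+1) → ℂ} (hk : 2*n+3 ≤ k)
  (hgen : ∀ I : Finset (Fin k), I.card ≤ n + 1 → LinearIndependent ℂ (fun i : I => p i.1))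
  (hsp : Module.finrank ℂ
    ↥(LinearMap.range (Fintype.linearCombination ℂ (fun r : Fin k => ver2 (p r)))) ≤ 2*n+1)

-- the chosen 2n+3 points
local notation "m" => 2*n+3

include hk hgen hsp in
lemma exists_good_pair :
    ∃ lam mu : Fin (2*n+3) → ℂ,
      (∑ r, lam r • ver2 (p (Fin.castLE hk r)) = 0) ∧
      (∑ r, mu r • ver2 (p (Fin.castLE hk r)) = 0) ∧
      (∀ r, lam r ≠ 0) ∧ (∀ r, mu r ≠ 0) ∧
      (∀ a b : Fin (2*n+3), a ≠ b → lam a * mu b - lam b * mu a ≠ 0) := by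
  classical
  set q : Fin m → Fin (n+1) → ℂ := fun r => p (Fin.castLE hk r) with hq
  set L : (Fin m → ℂ) →ₗ[ℂ] (Fin (n+1) → Fin (n+1) → ℂ) :=
    Fintype.linearCombination ℂ (fun r : Fin m => ver2 (q r)) with hL
  set Λ : Submodule ℂ (Fin m → ℂ) := LinearMap.ker L with hΛ
  -- range of L is inside range of the full map
  have hrange : LinearMap.range L ≤
      LinearMap.range (Fintype.linearCombination ℂ (fun r : Fin k => ver2 (p r))) := by
    rw [Fintype.range_linearCombination, Fintype.range_linearCombination]
    apply Submodule.span_mono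
    rintro x ⟨r, rfl⟩
    exact ⟨Fin.castLE hk r, rfl⟩
  have hrankL : Module.finrank ℂ ↥(LinearMap.range L) ≤ 2*n+1 :=
    le_trans (Submodule.finrank_mono hrange) hsp
  have hrnL := LinearMap.finrank_range_add_finrank_ker L
  rw [Module.finrank_fin_fun] at hrnL
  have hΛ2 : 2 ≤ Module.finrank ℂ ↥Λ := by
    rw [hΛ]; omega
  have hmemsum : ∀ v : Fin (2*n+3) → ℂ, v ∈ Λ → ∑ r : Fin (2*n+3), v r • ver2 (q r) = 0 := by
    intro v hv
    have h := LinearMap.mem_ker.1 hv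
    rwa [hL, Fintype.linearCombination_apply] at h
  -- sub-claim: an element of Λ vanishing at two (or all-but-2n+1) indices is zero
  have hvanish : ∀ (lam : Fin m → ℂ), lam ∈ Λ → ∀ (T : Finset (Fin m)), T.card ≤ 2*n+1 →
      (∀ r, r ∉ T → lam r = 0) → lam = 0 := by
    intro lam hlam T hTcard hout
    have hli : LinearIndependent ℂ (fun x : T => ver2 (q x.1)) := by
      have := ver2_li hgen (fun x : T => Fin.castLE hk x.1)
        (fun x y hxy => Subtype.ext (Fin.castLE_injective hk hxy))
        (by simpa [Fintype.card_coe] using hTcard)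
      exact this
    have hsum : ∑ x ∈ T, lam x • ver2 (q x) = 0 := by
      have h1 : ∑ r : Fin m, lam r • ver2 (q r) = 0 := hmemsum lam hlam
      rw [← h1]
      apply Finset.sum_subset (Finset.subset_univ T)
      intro x _ hx
      rw [hout x hx, zero_smul]
    have hsub : ∑ x : T, lam x.1 • ver2 (q x.1) = 0 := by
      rw [← hsum]
      exact Finset.sum_coe_sort T (fun r => lam r • ver2 (q r))
    have := Fintype.linearIndependent_iff.1 hli (fun x => lam x.1) hsub
    funext r
    by_cases hr : r ∈ T
    · exact this ⟨r, hr⟩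
    · exact hout r hr
  -- no dead coordinate: evaluation functionals are nonzero on Λ
  have hlive : ∀ r₀ : Fin m, ∃ lam ∈ Λ, lam r₀ ≠ 0 := by
    intro r₀
    by_contra h
    push_neg at h
    -- restriction to the complement is injective with image in a small space
    set T : Finset (Fin m) := Finset.univ.erase r₀ with hT
    have hTcard : T.card = 2*n+2 := by
      rw [hT, Finset.card_erase_of_mem (Finset.mem_univ _), Finset.card_univ, Fintype.card_fin]
      omega
    set L2 : (T → ℂ) →ₗ[ℂ] (Fin (n+1) → Fin (n+1) → ℂ) :=
      Fintype.linearCombination ℂ (fun x : T => ver2 (q x.1)) with hL2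
    -- rank of L2 is ≥ 2n+1
    have hrank2 : 2*n+1 ≤ Module.finrank ℂ ↥(LinearMap.range L2) := by
      obtain ⟨T', hT'sub, hT'card⟩ := Finset.exists_subset_card_eq (show 2*n+1 ≤ T.card by omega)
      have hli : LinearIndependent ℂ (fun x : T' => ver2 (q x.1)) := by
        exact ver2_li hgen (fun x : T' => Fin.castLE hk x.1)
          (fun x y hxy => Subtype.ext (Fin.castLE_injective hk hxy))
          (by simp [Fintype.card_coe, hT'card])
      have hspan := finrank_span_eq_card hli
      rw [Fintype.card_coe, hT'card] at hspan
      rw [← hspan]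
      apply Submodule.finrank_mono
      rw [hL2, Fintype.range_linearCombination]
      apply Submodule.span_mono
      rintro x ⟨y, rfl⟩
      exact ⟨⟨y.1, hT'sub y.2⟩, rfl⟩
    have hrn2 := LinearMap.finrank_range_add_finrank_ker L2
    rw [Module.finrank_pi] at hrn2
    have hcardT : Fintype.card T = 2*n+2 := by rw [Fintype.card_coe, hTcard]
    have hker2 : Module.finrank ℂ ↥(LinearMap.ker L2) ≤ 1 := by omega
    -- the restriction map Λ → ker L2 is injective
    set ρ : ↥Λ →ₗ[ℂ] (T → ℂ) := LinearMap.pi (fun x => (LinearMap.proj x.1) ∘ₗ Λ.subtype) with hρ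
    have hρinj : Function.Injective ρ := by
      rw [injective_iff_map_eq_zero]
      intro lam hlam0
      apply Subtype.ext
      funext r
      by_cases hr : r = r₀
      · rw [hr]; exact h lam.1 lam.2
      · have := congrFun hlam0 ⟨r, by simp [hT, hr]⟩
        simpa [hρ, LinearMap.pi_apply] using this
    have hρim : LinearMap.range ρ ≤ LinearMap.ker L2 := by
      rintro x ⟨lam, rfl⟩
      rw [LinearMap.mem_ker, hL2, Fintype.linearCombination_apply]
      have h1 : ∑ r : Fin m, lam.1 r • ver2 (q r) = 0 := hmemsum lam.1 lam.2
      have hsum : ∑ x ∈ T, lam.1 x • ver2 (q x) = 0 := by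
        rw [← h1]
        apply Finset.sum_subset (Finset.subset_univ T)
        intro x _ hx
        have : x = r₀ := by
          by_contra hne
          exact hx (by simp [hT, hne])
        rw [this, h lam.1 lam.2, zero_smul]
      calc ∑ x : T, ρ lam x • ver2 (q x.1)
          = ∑ x : T, lam.1 x.1 • ver2 (q x.1) := rfl
        _ = ∑ x ∈ T, lam.1 x • ver2 (q x) :=
            Finset.sum_coe_sort T (fun r => lam.1 r • ver2 (q r))
        _ = 0 := hsum
    have : Module.finrank ℂ ↥Λ ≤ 1 := by
      have h1 : Module.finrank ℂ ↥Λ = Module.finrank ℂ ↥(LinearMap.range ρ) :=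
        (LinearMap.finrank_range_of_inj hρinj).symm
      rw [h1]
      exact le_trans (Submodule.finrank_mono hρim) hker2
    omega
  -- pair nondegeneracy
  have hpair : ∀ a b : Fin m, a ≠ b → ∀ lam : Fin m → ℂ, lam ∈ Λ →
      lam a = 0 → lam b = 0 → lam = 0 := by
    intro a b hab lam hlam ha hb
    set T : Finset (Fin m) := (Finset.univ.erase a).erase b with hT
    have hTcard : T.card = 2*n+1 := by
      rw [hT, Finset.card_erase_of_mem, Finset.card_erase_of_mem (Finset.mem_univ _),
        Finset.card_univ, Fintype.card_fin]
      · omega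
      · exact Finset.mem_erase.2 ⟨(fun h => hab h.symm : b ≠ a), Finset.mem_univ _⟩
    apply hvanish lam hlam T (le_of_eq hTcard)
    intro r hr
    rcases (by
      by_contra hcon
      push_neg at hcon
      exact hr (by simp [hT, Finset.mem_erase, hcon.1, hcon.2]) : r = b ∨ r = a) with h1 | h1
    · rw [h1]; exact hb
    · rw [h1]; exact ha
  -- choose lam with full support
  have hevker : ∀ r : Fin m, LinearMap.ker ((LinearMap.proj r : (Fin m → ℂ) →ₗ[ℂ] ℂ) ∘ₗ Λ.subtype) ≠ ⊤ := by
    intro r hker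
    obtain ⟨lam, hlam, hne⟩ := hlive r
    have : (⟨lam, hlam⟩ : ↥Λ) ∈ LinearMap.ker ((LinearMap.proj r : (Fin m → ℂ) →ₗ[ℂ] ℂ) ∘ₗ Λ.subtype) := by
      rw [hker]; trivial
    exact hne this
  obtain ⟨lam, hlamall⟩ := exists_not_mem_of_proper (Finset.univ : Finset (Fin m))
    (fun r => LinearMap.ker ((LinearMap.proj r : (Fin m → ℂ) →ₗ[ℂ] ℂ) ∘ₗ Λ.subtype))
    (fun r _ => hevker r)
  have hlamne : ∀ r, (lam : Fin m → ℂ) r ≠ 0 := by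
    intro r hzero
    exact hlamall r (Finset.mem_univ r) (by simpa [LinearMap.mem_ker] using hzero)
  -- choose mu
  set F : (Fin m) ⊕ (Fin m × Fin m) → Submodule ℂ ↥Λ := fun idx =>
    match idx with
    | Sum.inl r => LinearMap.ker ((LinearMap.proj r : (Fin m → ℂ) →ₗ[ℂ] ℂ) ∘ₗ Λ.subtype)
    | Sum.inr (a, b) => LinearMap.ker
        (((lam : Fin m → ℂ) a • (LinearMap.proj b : (Fin m → ℂ) →ₗ[ℂ] ℂ)
          - (lam : Fin m → ℂ) b • (LinearMap.proj a : (Fin m → ℂ) →ₗ[ℂ] ℂ)) ∘ₗ Λ.subtype) with hF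
  set bad : Finset ((Fin m) ⊕ (Fin m × Fin m)) :=
    (Finset.univ.image Sum.inl) ∪ ((Finset.univ.filter (fun ab : Fin m × Fin m => ab.1 ≠ ab.2)).image Sum.inr) with hbad
  have hFproper : ∀ idx ∈ bad, F idx ≠ ⊤ := by
    intro idx hidx
    rcases idx with r | ⟨a, b⟩
    · exact hevker r
    · have hab : a ≠ b := by
        simp only [hbad, Finset.mem_union, Finset.mem_image] at hidx
        rcases hidx with ⟨x, _, hx⟩ | ⟨x, hx, hx2⟩
        · exact absurd hx (by simp)
        · obtain ⟨hx1, hx3⟩ := Finset.mem_filter.1 hx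
          cases hx2
          exact hx3
      intro hker
      -- need an element of Λ with lam a * nu b - lam b * nu a ≠ 0
      -- the projection (nu a, nu b) is injective-image: find nu with nu a = 0, nu b = 1
      -- via surjectivity of the 2-dim projection
      set π : ↥Λ →ₗ[ℂ] (Fin 2 → ℂ) := LinearMap.pi
        (fun i => (LinearMap.proj (if i = 0 then a else b) : (Fin m → ℂ) →ₗ[ℂ] ℂ) ∘ₗ Λ.subtype) with hπ
      have hπinj : Function.Injective π := by
        rw [injective_iff_map_eq_zero]
        intro nu hnu
        have h0 := congrFun hnu 0
        have h1 := congrFun hnu 1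
        simp only [hπ, LinearMap.pi_apply, LinearMap.comp_apply, LinearMap.proj_apply,
          Pi.zero_apply] at h0 h1
        norm_num at h0 h1
        exact Subtype.ext (hpair a b hab nu.1 nu.2 h0 h1)
      have hπsurj : LinearMap.range π = ⊤ := by
        apply Submodule.eq_top_of_finrank_eq
        rw [LinearMap.finrank_range_of_inj hπinj, Module.finrank_fin_fun]
        have hle2 : Module.finrank ℂ ↥Λ ≤ 2 := by
          by_contra hgt
          push_neg at hgt
          -- any 3-dim subspace of functions cannot inject into ℂ²... use injectivity directly
          have := LinearMap.finrank_range_of_inj hπinj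
          have hle : Module.finrank ℂ ↥(LinearMap.range π) ≤ 2 := by
            have := Submodule.finrank_le (LinearMap.range π)
            rwa [Module.finrank_fin_fun] at this
          omega
        omega
      obtain ⟨nu, hnu⟩ : ∃ nu : ↥Λ, π nu = (fun i => if i = 0 then 0 else 1) := by
        have : (fun i : Fin 2 => if i = 0 then (0:ℂ) else 1) ∈ LinearMap.range π := by
          rw [hπsurj]; trivial
        exact this
      have hnua : nu.1 a = 0 := by
        have := congrFun hnu 0
        simpa [hπ, LinearMap.pi_apply] using this
      have hnub : nu.1 b = 1 := by
        have := congrFun hnu 1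
        have h2 : ((1 : Fin 2) = 0) = False := by simp [Fin.ext_iff]
        simpa [hπ, LinearMap.pi_apply, h2] using this
      have hnuk : nu ∈ F (Sum.inr (a, b)) := by rw [hker]; trivial
      have this := LinearMap.mem_ker.1 hnuk
      simp only [LinearMap.comp_apply, LinearMap.sub_apply, LinearMap.smul_apply,
        LinearMap.proj_apply, smul_eq_mul] at this
      rw [show Λ.subtype nu = nu.1 from rfl, hnua, hnub] at this
      simp at this
      exact hlamne a this
  obtain ⟨mu, hmuall⟩ := exists_not_mem_of_proper bad F hFproper
  have hmune : ∀ r, (mu : Fin m → ℂ) r ≠ 0 := by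
    intro r hzero
    apply hmuall (Sum.inl r) (by simp [hbad])
    show mu ∈ LinearMap.ker ((LinearMap.proj r : (Fin (2*n+3) → ℂ) →ₗ[ℂ] ℂ) ∘ₗ Λ.subtype)
    simpa [LinearMap.mem_ker] using hzero
  refine ⟨lam.1, mu.1, hmemsum lam.1 lam.2, hmemsum mu.1 mu.2, hlamne, hmune, ?_⟩
  intro a b hab hdet
  apply hmuall (Sum.inr (a, b)) (by simp [hbad, hab])
  show mu ∈ LinearMap.ker
      ((((lam : Fin (2*n+3) → ℂ) a • (LinearMap.proj b : (Fin (2*n+3) → ℂ) →ₗ[ℂ] ℂ)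
        - (lam : Fin (2*n+3) → ℂ) b • (LinearMap.proj a : (Fin (2*n+3) → ℂ) →ₗ[ℂ] ℂ)) ∘ₗ Λ.subtype))
  rw [LinearMap.mem_ker]
  simp only [LinearMap.comp_apply, LinearMap.sub_apply, LinearMap.smul_apply,
    LinearMap.proj_apply, smul_eq_mul]
  rw [show Λ.subtype mu = mu.1 from rfl]
  rw [sub_eq_zero] at hdet ⊢
  exact hdet
end Core


lemma dotp_comm {d : ℕ} (a b : Fin d → ℂ) : dotp a b = dotp b a := by
  simp [dotp, mul_comm]




section Descent
variable {n k : ℕ} {p : Fin k → Fin (n+1) → ℂ} (hk : 2*n+3 ≤ k)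
  (hgen : ∀ I : Finset (Fin k), I.card ≤ n + 1 → LinearIndependent ℂ (fun i : I => p i.1))

/-- the distinguished subfamily of 2n+3 points -/
local notation "m" => 2*n+3

include hk hgen in
/-- The heart of Castelnuovo's lemma: a linear change of coordinates sending the
chosen `2n+3` points to scaled Veronese points with distinct parameters. -/
lemma exists_phi
    (lam mu : Fin (2*n+3) → ℂ)
    (hlamrel : ∑ r, lam r • ver2 (p (Fin.castLE hk r)) = 0)
    (hmurel : ∑ r, mu r • ver2 (p (Fin.castLE hk r)) = 0)
    (hlamne : ∀ r, lam r ≠ 0) (hmune : ∀ r, mu r ≠ 0)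
    (hdet : ∀ a b : Fin (2*n+3), a ≠ b → lam a * mu b - lam b * mu a ≠ 0) :
    ∃ (w : Fin (n+1) → Fin (n+1) → ℂ) (t z : Fin (2*n+3) → ℂ),
      LinearIndependent ℂ w ∧
      (∀ r j, dotp (w j) (p (Fin.castLE hk r)) = z r * (t r) ^ (j : ℕ)) := by
  classical
  set q : Fin m → Fin (n+1) → ℂ := fun r => p (Fin.castLE hk r) with hq
  set θ : Fin m → ℂ := fun r => mu r / lam r with hθ
  have hθne : ∀ r, θ r ≠ 0 := fun r => div_ne_zero (hmune r) (hlamne r)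
  have hθinj : Function.Injective θ := by
    intro a b hab
    by_contra hne
    apply hdet a b hne
    have h1 : mu a * lam b = mu b * lam a := (div_eq_div_iff (hlamne a) (hlamne b)).1 hab
    linear_combination (-1 : ℂ) * h1
  -- the evaluation map G
  set G : (Fin (n+1) → ℂ) →ₗ[ℂ] (Fin m → ℂ) := LinearMap.pi (fun r => dotL (q r)) with hG
  have hGapply : ∀ w r, G w r = dotp (q r) w := fun w r => rfl
  -- any n+1 of the points q are independent
  have hqli : ∀ {ι : Type} [Fintype ι] (g : ι → Fin m), Function.Injective g →
      Fintype.card ι ≤ n+1 → LinearIndependent ℂ (fun x => q (g x)) := by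
    intro ι _ g hg hcard
    exact li_of_inj hgen (fun x => Fin.castLE hk (g x))
      (fun x y hxy => hg (Fin.castLE_injective hk hxy)) hcard
  have hGinj : Function.Injective G := by
    rw [injective_iff_map_eq_zero]
    intro w hw
    have hli : LinearIndependent ℂ (fun x : Fin (n+1) => q (Fin.castLE (by omega : n+1 ≤ m) x)) :=
      hqli _ (Fin.castLE_injective _) (by simp)
    apply eq_zero_of_dotp_indep (by simp) _ hli
    intro r
    rw [dotp_comm]
    have := congrFun hw (Fin.castLE (by omega : n+1 ≤ m) r)
    rw [hGapply] at this
    exact this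
  -- the maps M_lam, M_mu
  have hMrel : ∀ (c : Fin m → ℂ), (∑ r, c r • ver2 (q r) = 0) → ∀ v,
      (Fintype.linearCombination ℂ (fun r => c r • q r)) (G v) = 0 := by
    intro c hc v
    rw [Fintype.linearCombination_apply]
    funext i
    have hij : ∀ jj : Fin (n+1), ∑ r, c r * (q r i * q r jj) = 0 := by
      intro jj
      have h1 := congrFun (congrFun hc i) jj
      simpa [Finset.sum_apply, ver2] using h1
    have : ∀ r : Fin m, (G v r • (c r • q r)) i = ∑ jj, (c r * (q r i * q r jj)) * v jj := by
      intro r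
      simp only [Pi.smul_apply, smul_eq_mul, hGapply, dotp, Finset.sum_mul, Finset.mul_sum]
      exact Finset.sum_congr rfl fun jj _ => by ring
    calc (∑ r, G v r • (c r • q r)) i = ∑ r, ∑ jj, (c r * (q r i * q r jj)) * v jj := by
          rw [Finset.sum_apply]
          exact Finset.sum_congr rfl fun r _ => this r
      _ = ∑ jj, (∑ r, c r * (q r i * q r jj)) * v jj := by
          rw [Finset.sum_comm]
          exact Finset.sum_congr rfl fun jj _ => by rw [Finset.sum_mul]
      _ = 0 := by
          apply Finset.sum_eq_zero
          intro jj _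
          rw [hij jj, zero_mul]
  set Mlam : (Fin m → ℂ) →ₗ[ℂ] (Fin (n+1) → ℂ) :=
    Fintype.linearCombination ℂ (fun r => lam r • q r) with hMlam
  -- Mlam is surjective
  have hspanq : span ℂ (Set.range q) = ⊤ := by
    apply Submodule.eq_top_of_finrank_eq
    rw [Module.finrank_fin_fun]
    have hli : LinearIndependent ℂ (fun x : Fin (n+1) => q (Fin.castLE (by omega : n+1 ≤ m) x)) :=
      hqli _ (Fin.castLE_injective _) (by simp)
    have h1 := finrank_span_eq_card hli
    have hle : span ℂ (Set.range (fun x : Fin (n+1) => q (Fin.castLE (by omega : n+1 ≤ m) x)))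
        ≤ span ℂ (Set.range q) := by
      apply Submodule.span_mono
      rintro x ⟨y, rfl⟩
      exact ⟨_, rfl⟩
    have h2 := Submodule.finrank_mono hle
    have h3 := Submodule.finrank_le (span ℂ (Set.range q))
    rw [Module.finrank_fin_fun] at h3
    simp only [Fintype.card_fin] at h1
    omega
  have hMlamsurj : LinearMap.range Mlam = ⊤ := by
    rw [eq_top_iff, ← hspanq]
    rw [span_le]
    rintro x ⟨r, rfl⟩
    refine ⟨Pi.single r ((lam r)⁻¹), ?_⟩
    rw [hMlam, Fintype.linearCombination_apply_single]
    rw [smul_smul, inv_mul_cancel₀ (hlamne r), one_smul]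
  have hkerMlam : Module.finrank ℂ ↥(LinearMap.ker Mlam) = n+2 := by
    have := LinearMap.finrank_range_add_finrank_ker Mlam
    rw [hMlamsurj, finrank_top, Module.finrank_fin_fun, Module.finrank_fin_fun] at this
    omega
  -- multiplication operator T
  set Tm : (Fin m → ℂ) →ₗ[ℂ] (Fin m → ℂ) :=
    { toFun := fun x => fun r => θ r * x r
      map_add' := fun x y => by funext r; simp [mul_add]
      map_smul' := fun c x => by funext r; simp [smul_eq_mul]; ring } with hTm
  set Tm' : (Fin m → ℂ) →ₗ[ℂ] (Fin m → ℂ) :=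
    { toFun := fun x => fun r => (θ r)⁻¹ * x r
      map_add' := fun x y => by funext r; simp [mul_add]
      map_smul' := fun c x => by funext r; simp [smul_eq_mul]; ring } with hTm'
  set T : (Fin m → ℂ) ≃ₗ[ℂ] (Fin m → ℂ) :=
    LinearEquiv.ofLinear Tm Tm'
      (by apply LinearMap.ext; intro x; funext r;
          simp [hTm, hTm', mul_inv_cancel_left₀ (hθne r)])
      (by apply LinearMap.ext; intro x; funext r;
          simp [hTm, hTm', inv_mul_cancel_left₀ (hθne r)]) with hT
  set U : Submodule ℂ (Fin m → ℂ) := LinearMap.range G with hU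
  have hUker : U ≤ LinearMap.ker Mlam := by
    rintro x ⟨v, rfl⟩
    exact LinearMap.mem_ker.2 (hMrel lam hlamrel v)
  have hTUker : Submodule.map (T : (Fin m → ℂ) →ₗ[ℂ] (Fin m → ℂ)) U ≤ LinearMap.ker Mlam := by
    rintro x ⟨y, ⟨v, rfl⟩, rfl⟩
    rw [LinearMap.mem_ker]
    have h1 : Mlam (T (G v)) = (Fintype.linearCombination ℂ (fun r => mu r • q r)) (G v) := by
      rw [hMlam, Fintype.linearCombination_apply, Fintype.linearCombination_apply]
      apply Finset.sum_congr rfl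
      intro r _
      have hTGv : (T (G v)) r = θ r * G v r := rfl
      have hscal : θ r * lam r = mu r := by
        show mu r / lam r * lam r = mu r
        exact div_mul_cancel₀ _ (hlamne r)
      rw [hTGv, smul_smul, smul_smul]
      congr 1
      rw [← hscal]
      ring
    have h2 : Mlam (T (G v)) = 0 := by rw [h1]; exact hMrel mu hmurel v
    exact h2
  -- the descending chain
  set Nc : ℕ → Submodule ℂ (Fin m → ℂ) :=
    fun j => Nat.rec U (fun _ Nj => Nj ⊓ Submodule.map (T : (Fin m → ℂ) →ₗ[ℂ] (Fin m → ℂ)) Nj) j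
    with hNc
  have hNc0 : Nc 0 = U := rfl
  have hNcsucc : ∀ j, Nc (j+1) = Nc j ⊓ Submodule.map (T : (Fin m → ℂ) →ₗ[ℂ] (Fin m → ℂ)) (Nc j) :=
    fun j => rfl
  have hNmono : ∀ j, Nc (j+1) ≤ Nc j := fun j => by rw [hNcsucc]; exact inf_le_left
  have hNmap : ∀ j, Nc (j+1) ≤ Submodule.map (T : (Fin m → ℂ) →ₗ[ℂ] (Fin m → ℂ)) (Nc j) :=
    fun j => by rw [hNcsucc]; exact inf_le_right
  have hNU : ∀ j, Nc j ≤ U := by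
    intro j
    induction j with
    | zero => exact le_of_eq hNc0
    | succ j ih => exact le_trans (hNmono j) ih
  have hfinrank_map : ∀ (N : Submodule ℂ (Fin m → ℂ)),
      Module.finrank ℂ ↥(Submodule.map (T : (Fin m → ℂ) →ₗ[ℂ] (Fin m → ℂ)) N)
        = Module.finrank ℂ ↥N := fun N => LinearEquiv.finrank_map_eq T N
  have hd0 : Module.finrank ℂ ↥U = n+1 := by
    rw [hU, LinearMap.finrank_range_of_inj hGinj, Module.finrank_fin_fun]
  -- dimension recursion
  have hdim : ∀ j, Module.finrank ℂ ↥(Nc j) + Module.finrank ℂ ↥(Nc j)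
      = Module.finrank ℂ ↥(Nc j ⊔ Submodule.map (T : (Fin m → ℂ) →ₗ[ℂ] (Fin m → ℂ)) (Nc j))
        + Module.finrank ℂ ↥(Nc (j+1)) := by
    intro j
    have := Submodule.finrank_sup_add_finrank_inf_eq (Nc j)
      (Submodule.map (T : (Fin m → ℂ) →ₗ[ℂ] (Fin m → ℂ)) (Nc j))
    rw [hfinrank_map] at this
    rw [← hNcsucc] at this
    omega
  have hd1 : n ≤ Module.finrank ℂ ↥(Nc 1) := by
    have h1 := hdim 0
    have hsup : Nc 0 ⊔ Submodule.map (T : (Fin m → ℂ) →ₗ[ℂ] (Fin m → ℂ)) (Nc 0)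
        ≤ LinearMap.ker Mlam := by
      rw [hNc0]
      exact sup_le hUker hTUker
    have h2 := Submodule.finrank_mono hsup
    rw [hkerMlam] at h2
    rw [show (0:ℕ)+1 = 1 from rfl] at h1
    have e1 : Module.finrank ℂ ↥(Nc 0) = Module.finrank ℂ ↥U := by rw [hNc0]
    omega
  have hgap : ∀ j, Module.finrank ℂ ↥(Nc j) ≤ Module.finrank ℂ ↥(Nc (j+1)) + 1 := by
    intro j
    induction j with
    | zero =>
      rw [show (0:ℕ)+1 = 1 from rfl]
      have e1 : Module.finrank ℂ ↥(Nc 0) = Module.finrank ℂ ↥U := by rw [hNc0]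
      omega
    | succ j ih =>
      have h1 := hdim (j+1)
      have hsup : Nc (j+1) ⊔ Submodule.map (T : (Fin m → ℂ) →ₗ[ℂ] (Fin m → ℂ)) (Nc (j+1))
          ≤ Submodule.map (T : (Fin m → ℂ) →ₗ[ℂ] (Fin m → ℂ)) (Nc j) :=
        sup_le (hNmap j) (Submodule.map_mono (hNmono j))
      have h2 := Submodule.finrank_mono hsup
      rw [hfinrank_map] at h2
      omega
  have hdn : 1 ≤ Module.finrank ℂ ↥(Nc n) := by
    have : ∀ j, Module.finrank ℂ ↥(Nc 0) ≤ Module.finrank ℂ ↥(Nc j) + j := by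
      intro j
      induction j with
      | zero => omega
      | succ j ih =>
        have := hgap j
        omega
    have h1 := this n
    rw [hNc0, hd0] at h1
    omega
  -- extract z
  have hNne : Nc n ≠ ⊥ := by
    intro hbot
    rw [hbot, finrank_bot] at hdn
    omega
  obtain ⟨z, hzN, hzne⟩ := (Submodule.ne_bot_iff _).1 hNne
  -- dividing by θ descends the chain
  have hstep : ∀ (j : ℕ) (x : Fin m → ℂ), x ∈ Nc (j+1) →
      (fun r => (θ r)⁻¹ * x r) ∈ Nc j := by
    intro j x hx
    obtain ⟨y, hy, hyx⟩ := hNmap j hx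
    have : (fun r => (θ r)⁻¹ * x r) = y := by
      funext r
      have : θ r * y r = x r := congrFun hyx r
      rw [← this, inv_mul_cancel_left₀ (hθne r)]
    rw [this]
    exact hy
  have hiter : ∀ j, j ≤ n → (fun r => ((θ r)⁻¹) ^ j * z r) ∈ Nc (n - j) := by
    intro j
    induction j with
    | zero => intro _; simpa using hzN
    | succ j ih =>
      intro hj
      have h1 : (fun r => ((θ r)⁻¹) ^ j * z r) ∈ Nc (n - j) := ih (by omega)
      have h2 : n - j = (n - (j+1)) + 1 := by omega
      rw [h2] at h1
      have h3 := hstep _ _ h1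
      have : (fun r => (θ r)⁻¹ * (((θ r)⁻¹) ^ j * z r))
          = (fun r => ((θ r)⁻¹) ^ (j+1) * z r) := by
        funext r
        rw [pow_succ]
        ring
      rwa [this] at h3
  -- the vectors w_j
  have huU : ∀ j : Fin (n+1), (fun r => ((θ r)⁻¹) ^ (j:ℕ) * z r) ∈ U := by
    intro j
    exact hNU _ (hiter j (by omega))
  choose w hw using fun j : Fin (n+1) => huU j
  -- z has at most n zero entries
  have hzsupp : (Finset.univ.filter (fun r : Fin m => z r ≠ 0)).card ≥ n+1 := by
    by_contra hcon
    push_neg at hcon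
    have hz0card : n+3 ≤ (Finset.univ.filter (fun r : Fin m => z r = 0)).card := by
      have := Finset.card_filter_add_card_filter_not
        (s := (Finset.univ : Finset (Fin m))) (p := fun r : Fin m => z r = 0)
      simp only [Finset.card_univ, Fintype.card_fin] at this
      have heq : (Finset.univ.filter (fun r : Fin m => ¬ z r = 0)).card
          = (Finset.univ.filter (fun r : Fin m => z r ≠ 0)).card := rfl
      omega
    obtain ⟨B, hBsub, hBcard⟩ := Finset.exists_subset_card_eq
      (le_trans (by omega : n+1 ≤ n+3) hz0card)
    -- z = G w₀ vanishes on n+1 independent points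
    obtain ⟨w₀, hw₀⟩ : z ∈ U := hNU n hzN
    have hw₀ne : w₀ ≠ 0 := by
      intro h0; apply hzne; rw [← hw₀, h0, map_zero]
    apply hw₀ne
    have hli : LinearIndependent ℂ (fun x : B => q x.1) :=
      hqli _ Subtype.val_injective (by simp [Fintype.card_coe, hBcard])
    apply eq_zero_of_dotp_indep (by simp [Fintype.card_coe, hBcard]) _ hli
    intro x
    rw [dotp_comm]
    have h1 : G w₀ x.1 = dotp (q x.1) w₀ := rfl
    have h2 : z x.1 = 0 := by
      have := hBsub x.2
      simpa using (Finset.mem_filter.1 this).2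
    rw [← h1, hw₀, h2]
  -- independence of the w's
  have hwli : LinearIndependent ℂ w := by
    rw [Fintype.linearIndependent_iff]
    intro c hc
    -- apply G
    have hGc : ∑ j, c j • (fun r => ((θ r)⁻¹) ^ (j:ℕ) * z r) = (0 : Fin m → ℂ) := by
      have := congrArg G hc
      rw [map_sum, map_zero] at this
      rw [← this]
      exact Finset.sum_congr rfl fun j _ => by rw [map_smul, hw j]
    obtain ⟨B, hBsub, hBcard⟩ := Finset.exists_subset_card_eq hzsupp
    set e : Fin (n+1) ≃ B := (Fintype.equivFinOfCardEq (by simp [Fintype.card_coe, hBcard])).symm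
      with he
    have hzB : ∀ x : B, z x.1 ≠ 0 := by
      intro x
      have := hBsub x.2
      simpa using (Finset.mem_filter.1 this).2
    have hvals : ∀ l : Fin (n+1), ∑ j : Fin (n+1), c j * ((θ (e l).1)⁻¹) ^ (j:ℕ) = 0 := by
      intro l
      have h1 := congrFun hGc (e l).1
      simp only [Finset.sum_apply, Pi.smul_apply, smul_eq_mul, Pi.zero_apply] at h1
      have h2 : (∑ j : Fin (n+1), c j * ((θ (e l).1)⁻¹) ^ (j:ℕ)) * z (e l).1 = 0 := by
        rw [← h1, Finset.sum_mul]
        exact Finset.sum_congr rfl fun j _ => by ring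
      rcases mul_eq_zero.1 h2 with h | h
      · exact h
      · exact absurd h (hzB (e l))
    have hxinj : Function.Injective (fun l : Fin (n+1) => (θ (e l).1)⁻¹) := by
      intro a b hab
      have h1 : θ (e a).1 = θ (e b).1 := by
        have := inv_injective hab
        exact this
      have h2 : (e a).1 = (e b).1 := hθinj h1
      exact e.injective (Subtype.ext h2)
    have := vandermonde_solve _ hxinj c hvals
    intro j
    rw [this]
    rfl
  refine ⟨w, fun r => (θ r)⁻¹, z, hwli, ?_⟩
  intro r j
  have h1 : dotp (q r) (w j) = ((θ r)⁻¹) ^ (j:ℕ) * z r := by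
    have := congrFun (hw j) r
    exact this
  rw [dotp_comm, h1]
  ring
end Descent

/-- Hankel classification: a rank-one Hankel "matrix" `y ⊗ y` forces `y` to be a
scaled Veronese vector. -/
lemma hankel_classify {n : ℕ} (hn : 1 ≤ n) (y : Fin (n+1) → ℂ) (hy : y ≠ 0)
    (hH : ∀ i j i' j' : Fin (n+1), (i:ℕ) + (j:ℕ) = (i':ℕ) + (j':ℕ) → y i * y j = y i' * y j') :
    ∃ s t c : ℂ, (s ≠ 0 ∨ t ≠ 0) ∧ c ≠ 0 ∧
      (∀ i : Fin (n+1), y i = c * (s ^ (n - (i:ℕ)) * t ^ (i:ℕ))) := by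
  set i0 : Fin (n+1) := ⟨0, by omega⟩ with hi0
  set i1 : Fin (n+1) := ⟨1, by omega⟩ with hi1
  by_cases h0 : y i0 = 0
  · -- all but the last entry vanish
    have hzero : ∀ M : ℕ, (hM : M < n) → y ⟨M, by omega⟩ = 0 := by
      intro M
      induction M with
      | zero => intro _; exact h0
      | succ M ih =>
        intro hM
        have hIH : y ⟨M, by omega⟩ = 0 := ih (by omega)
        have h1 : y ⟨M+1, by omega⟩ * y ⟨M+1, by omega⟩
            = y ⟨M, by omega⟩ * y ⟨M+2, by omega⟩ := by
          apply hH
          simp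
          omega
        rw [hIH, zero_mul] at h1
        exact mul_self_eq_zero.1 h1
    have hlast : y ⟨n, by omega⟩ ≠ 0 := by
      intro hl
      apply hy
      funext i
      by_cases hin : (i : ℕ) = n
      · have : i = ⟨n, by omega⟩ := by apply Fin.ext; exact hin
        rw [this, hl]; rfl
      · have : i = ⟨(i:ℕ), i.isLt⟩ := by apply Fin.ext; rfl
        rw [this, hzero (i:ℕ) (by omega)]; rfl
    refine ⟨0, 1, y ⟨n, by omega⟩, Or.inr one_ne_zero, hlast, ?_⟩
    intro i
    by_cases hin : (i : ℕ) = n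
    · have he : i = ⟨n, by omega⟩ := by apply Fin.ext; exact hin
      rw [he]
      simp [hin]
    · have he : i = ⟨(i:ℕ), i.isLt⟩ := by apply Fin.ext; rfl
      rw [he, hzero (i:ℕ) (by omega)]
      rw [zero_pow (by omega : n - (⟨(i:ℕ), i.isLt⟩ : Fin (n+1)).1 ≠ 0)]
      ring
  · -- geometric progression
    set t : ℂ := y i1 / y i0 with ht
    have hgeo : ∀ M : ℕ, (hM : M ≤ n) → y ⟨M, by omega⟩ = y i0 * t ^ M := by
      intro M
      induction M with
      | zero =>
        intro _
        have : (⟨0, by omega⟩ : Fin (n+1)) = i0 := rfl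
        rw [this, pow_zero, mul_one]
      | succ M ih =>
        intro hM
        have hIH := ih (by omega)
        have h1 : y ⟨M+1, by omega⟩ * y i0 = y ⟨M, by omega⟩ * y i1 := by
          apply hH
          simp [hi0, hi1]
        have h2 : y ⟨M+1, by omega⟩ = y ⟨M, by omega⟩ * y i1 / y i0 :=
          (eq_div_iff h0).2 h1
        have ht0 : t * y i0 = y i1 := div_mul_cancel₀ _ h0
        rw [h2, hIH, ← ht0, pow_succ]
        field_simp
    refine ⟨1, t, y i0, Or.inl one_ne_zero, h0, ?_⟩
    intro i
    have he : i = ⟨(i:ℕ), i.isLt⟩ := by apply Fin.ext; rfl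
    rw [he, hgeo (i:ℕ) (by omega), one_pow, one_mul]


/-- conjugation of a "matrix" by the collection of rows w -/
noncomputable def conjMap {d : ℕ} (w : Fin d → Fin d → ℂ) :
    (Fin d → Fin d → ℂ) →ₗ[ℂ] (Fin d → Fin d → ℂ) where
  toFun A := fun i j => quadL (w i) (w j) A
  map_add' A B := by funext i j; simp
  map_smul' c A := by funext i j; simp

lemma conjMap_ver2 {d : ℕ} (w : Fin d → Fin d → ℂ) (v : Fin d → ℂ) :
    conjMap w (ver2 v) = ver2 (fun j => dotp (w j) v) := by
  funext i j
  show quadL (w i) (w j) (ver2 v) = dotp (w i) v * dotp (w j) v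
  exact quadL_ver2 _ _ _

/-- the submodule of Hankel matrices -/
noncomputable def hankel (d : ℕ) : Submodule ℂ (Fin d → Fin d → ℂ) where
  carrier := {A | ∀ i j i' j' : Fin d, (i:ℕ) + (j:ℕ) = (i':ℕ) + (j':ℕ) → A i j = A i' j'}
  add_mem' := by
    intro A B hA hB i j i' j' h
    show A i j + B i j = A i' j' + B i' j'
    rw [hA i j i' j' h, hB i j i' j' h]
  zero_mem' := by intro i j i' j' h; rfl
  smul_mem' := by
    intro c A hA i j i' j' h
    show c * A i j = c * A i' j'
    rw [hA i j i' j' h]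

lemma mem_hankel {d : ℕ} (A : Fin d → Fin d → ℂ) :
    A ∈ hankel d ↔ ∀ i j i' j' : Fin d, (i:ℕ) + (j:ℕ) = (i':ℕ) + (j':ℕ) → A i j = A i' j' :=
  Iff.rfl

end Cast13

open Cast13

/-- A subset `C` of `ℙⁿ = ℙ(ℂ^{n+1})` is a rational normal curve (of degree `n`) if it is
the image of an embedding `ℙ¹ → ℙⁿ` given by a basis of the degree-`n` binary forms,
i.e. a linear change of coordinates applied to the standard Veronese
`(s:t) ↦ [sⁿ : s^{n-1}t : … : tⁿ]`. -/
def IsRationalNormalCurve (n : ℕ)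
    (C : Set (Projectivization ℂ (Fin (n + 1) → ℂ))) : Prop :=
  ∃ M : (Fin (n + 1) → ℂ) ≃ₗ[ℂ] (Fin (n + 1) → ℂ),
    C = {x | ∃ s t c : ℂ, (s ≠ 0 ∨ t ≠ 0) ∧ c ≠ 0 ∧
      x.rep = c • M (fun i => s ^ (n - (i : ℕ)) * t ^ (i : ℕ))}

/-- (Castelnuovo Lemma)  Let `n ≥ 2` and `k ≥ 2n+3`.  If `P = {[p 1], …, [p k]} ⊆ ℙⁿ` is a
set of `k` points in general position (any `n+1` of them linearly independent) imposing
only `2n+1` conditions on the linear system of quadrics — i.e. the subspace of quadrics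
vanishing on `P` has codimension `2n+1` in the space of all quadrics — then `P` is
contained in a rational normal curve of degree `n`. -/
theorem stmt_13 (n k : ℕ) (hn : 2 ≤ n) (hk : 2 * n + 3 ≤ k)
    (p : Fin k → (Fin (n + 1) → ℂ)) (hp : ∀ i, p i ≠ 0)
    (hgen : ∀ I : Finset (Fin k), I.card ≤ n + 1 →
      LinearIndependent ℂ (fun i : I => p i.1))
    (hcond : Module.finrank ℂ ↥(MvPolynomial.homogeneousSubmodule (Fin (n + 1)) ℂ 2)
      = Module.finrank ℂ ↥((MvPolynomial.homogeneousSubmodule (Fin (n + 1)) ℂ 2) ⊓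
          ⨅ i : Fin k, LinearMap.ker (MvPolynomial.aeval (R := ℂ) (p i)).toLinearMap)
        + (2 * n + 1)) :
    ∃ C : Set (Projectivization ℂ (Fin (n + 1) → ℂ)),
      IsRationalNormalCurve n C ∧ ∀ i, Projectivization.mk ℂ (p i) (hp i) ∈ C := by
  classical
  have hsp := span_ver2_le p hcond
  obtain ⟨lam, mu, hlamrel, hmurel, hlamne, hmune, hdet⟩ := exists_good_pair hk hgen hsp
  obtain ⟨w, t, z, hwli, hwq⟩ := exists_phi hk hgen lam mu hlamrel hmurel hlamne hmune hdet
  set Φl : (Fin (n+1) → ℂ) →ₗ[ℂ] (Fin (n+1) → ℂ) := LinearMap.pi (fun j => dotL (w j)) with hΦl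
  have hΦlapp : ∀ v j, Φl v j = dotp (w j) v := fun v j => rfl
  have hΦinj : Function.Injective Φl := by
    rw [injective_iff_map_eq_zero]
    intro v hv
    apply eq_zero_of_dotp_indep (by simp) w hwli
    intro r
    rw [dotp_comm]
    rw [← hΦlapp v r, hv]
    rfl
  have hΦbij : Function.Bijective Φl := ⟨hΦinj, LinearMap.injective_iff_surjective.1 hΦinj⟩
  set Φ : (Fin (n+1) → ℂ) ≃ₗ[ℂ] (Fin (n+1) → ℂ) := LinearEquiv.ofBijective Φl hΦbij with hΦ
  refine ⟨{x | ∃ s t c : ℂ, (s ≠ 0 ∨ t ≠ 0) ∧ c ≠ 0 ∧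
      x.rep = c • Φ.symm (fun i => s ^ (n - (i : ℕ)) * t ^ (i : ℕ))}, ⟨Φ.symm, rfl⟩, ?_⟩
  intro x
  -- span equality
  set SAll := LinearMap.range (Fintype.linearCombination ℂ (fun r : Fin k => ver2 (p r)))
    with hSAll
  set SSub := LinearMap.range (Fintype.linearCombination ℂ
    (fun r : Fin (2*n+3) => ver2 (p (Fin.castLE hk r)))) with hSSub
  have hsuble : SSub ≤ SAll := by
    rw [hSSub, hSAll, Fintype.range_linearCombination, Fintype.range_linearCombination]
    apply Submodule.span_mono
    rintro A ⟨r, rfl⟩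
    exact ⟨Fin.castLE hk r, rfl⟩
  have hge : 2*n+1 ≤ Module.finrank ℂ ↥SSub := by
    have hli : LinearIndependent ℂ
        (fun r : Fin (2*n+1) => ver2 (p (Fin.castLE (by omega : 2*n+1 ≤ k) r))) :=
      ver2_li hgen _ (Fin.castLE_injective _) (by simp)
    have h1 := finrank_span_eq_card hli
    simp only [Fintype.card_fin] at h1
    rw [← h1]
    apply Submodule.finrank_mono
    rw [hSSub, Fintype.range_linearCombination]
    apply Submodule.span_le.2
    rintro A ⟨r, rfl⟩
    apply Submodule.subset_span
    refine ⟨Fin.castLE (by omega : 2*n+1 ≤ 2*n+3) r, ?_⟩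
    rfl
  have heq : SSub = SAll := Submodule.eq_of_le_of_finrank_le hsuble (le_trans hsp hge)
  have hVx : ver2 (p x) ∈ SSub := by
    rw [heq, hSAll]
    exact ⟨Pi.single x 1, by rw [Fintype.linearCombination_apply_single, one_smul]⟩
  -- conjugate into Hankel
  have hCJ : ∀ A ∈ SSub, conjMap w A ∈ hankel (n+1) := by
    intro A hA
    rw [hSSub, Fintype.range_linearCombination] at hA
    induction hA using Submodule.span_induction with
    | mem A hA =>
      obtain ⟨r, rfl⟩ := hA
      rw [conjMap_ver2]
      have hfun : (fun j : Fin (n+1) => dotp (w j) (p (Fin.castLE hk r)))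
          = fun j : Fin (n+1) => z r * (t r) ^ (j:ℕ) := by
        funext j
        exact hwq r j
      rw [hfun]
      rw [mem_hankel]
      intro i j i' j' h
      have key : ∀ a b : ℕ, (z r * t r ^ a) * (z r * t r ^ b) = (z r * z r) * t r ^ (a+b) := by
        intro a b
        rw [pow_add]
        ring
      show (z r * t r ^ (i:ℕ)) * (z r * t r ^ (j:ℕ))
          = (z r * t r ^ (i':ℕ)) * (z r * t r ^ (j':ℕ))
      rw [key, key, h]
    | zero => rw [map_zero]; exact Submodule.zero_mem _
    | add A B _ _ hA hB => rw [map_add]; exact Submodule.add_mem _ hA hB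
    | smul c A _ hA => rw [map_smul]; exact Submodule.smul_mem _ _ hA
  have hHank : ver2 (Φl (p x)) ∈ hankel (n+1) := by
    have h1 : conjMap w (ver2 (p x)) = ver2 (Φl (p x)) := by
      rw [conjMap_ver2]
      rfl
    rw [← h1]
    exact hCJ _ hVx
  set y : Fin (n+1) → ℂ := Φl (p x) with hy
  have hyne : y ≠ 0 := by
    intro h0
    exact hp x (hΦinj (by rw [map_zero]; exact h0))
  obtain ⟨s, tt, c, hst, hc, hform⟩ := hankel_classify (by omega) y hyne ((mem_hankel _).1 hHank)
  have hyform : y = c • (fun i : Fin (n+1) => s ^ (n - (i:ℕ)) * tt ^ (i:ℕ)) := by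
    funext i
    rw [hform i]
    rfl
  have hpx : p x = c • Φ.symm (fun i : Fin (n+1) => s ^ (n - (i:ℕ)) * tt ^ (i:ℕ)) := by
    have h1 : Φ (p x) = y := rfl
    have h2 : p x = Φ.symm y := by
      rw [← h1, LinearEquiv.symm_apply_apply]
    rw [h2, hyform, map_smul]
  -- rep juggling
  have hrep := Projectivization.mk_rep (Projectivization.mk ℂ (p x) (hp x))
  obtain ⟨a, ha⟩ := (Projectivization.mk_eq_mk_iff ℂ _ _
    (Projectivization.rep_nonzero _) (hp x)).1 hrep
  refine ⟨s, tt, a.val * c, hst, mul_ne_zero a.ne_zero hc, ?_⟩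
  rw [← ha, hpx, Units.smul_def, smul_smul]
end

section
/- (Tait–Kneser variant) Let f be a real polynomial and n an even integer with n < deg f. For a < b real, let g_t(x) = Σ_{i=0}^n f^{(i)}(t)(x−t)^i / i! be the n-th osculating polynomial of f at t. If f^{(n+1)}(t) ≠ 0 for all t ∈ (a,b), then the graphs of g_a and g_b do not intersect in ℝ²; that is, g_a(x) ≠ g_b(x) for all real x. -/
open Polynomial Set Finset

private lemma TK_hasDerivAt (f : Polynomial ℝ) (x : ℝ) (n : ℕ) (t : ℝ) :
    HasDerivAt (fun s => ∑ i ∈ Finset.range (n + 1),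
        ((fun q : Polynomial ℝ => Polynomial.derivative q)^[i] f).eval s
          * (x - s) ^ i / (Nat.factorial i : ℝ))
      (((fun q : Polynomial ℝ => Polynomial.derivative q)^[n + 1] f).eval t
          * (x - t) ^ n / (Nat.factorial n : ℝ)) t := by
  induction n with
  | zero =>
    have h : (fun s => ∑ i ∈ Finset.range 1,
        ((fun q : Polynomial ℝ => Polynomial.derivative q)^[i] f).eval s
          * (x - s) ^ i / (Nat.factorial i : ℝ)) = fun s => f.eval s := by
      funext s; simp
    rw [h]
    simpa using f.hasDerivAt t
  | succ n ih =>
    have h : (fun s => ∑ i ∈ Finset.range (n + 2),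
        ((fun q : Polynomial ℝ => Polynomial.derivative q)^[i] f).eval s
          * (x - s) ^ i / (Nat.factorial i : ℝ))
      = fun s => (∑ i ∈ Finset.range (n + 1),
        ((fun q : Polynomial ℝ => Polynomial.derivative q)^[i] f).eval s
          * (x - s) ^ i / (Nat.factorial i : ℝ))
        + ((fun q : Polynomial ℝ => Polynomial.derivative q)^[n + 1] f).eval s
          * (x - s) ^ (n + 1) / (Nat.factorial (n + 1) : ℝ) := by
      funext s; rw [Finset.sum_range_succ]
    rw [h]
    have h1 : HasDerivAt
        (fun s => ((fun q : Polynomial ℝ => Polynomial.derivative q)^[n + 1] f).eval s)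
        (((fun q : Polynomial ℝ => Polynomial.derivative q)^[n + 2] f).eval t) t := by
      have := Polynomial.hasDerivAt ((fun q : Polynomial ℝ => Polynomial.derivative q)^[n + 1] f) t
      simpa [Function.iterate_succ_apply'] using this
    have h2 : HasDerivAt (fun s => (x - s) ^ (n + 1))
        (((n : ℝ) + 1) * (x - t) ^ n * (-1)) t := by
      have := ((hasDerivAt_id t).const_sub x).pow (n + 1)
      simpa [Pi.pow_def] using this
    have h3 := ((h1.mul h2).div_const ((Nat.factorial (n + 1) : ℝ)))
    have h4 := ih.add h3
    refine h4.congr_deriv ?_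
    have hfac : (Nat.factorial (n + 1) : ℝ) = ((n : ℝ) + 1) * (Nat.factorial n : ℝ) := by
      push_cast [Nat.factorial_succ]; ring
    have hn0 : (Nat.factorial n : ℝ) ≠ 0 := by positivity
    have hn1 : ((n : ℝ) + 1) ≠ 0 := by positivity
    rw [hfac]
    field_simp
    ring

private lemma TK_sign (g : Polynomial ℝ) (a b : ℝ)
    (h : ∀ t ∈ Set.Ioo a b, g.eval t ≠ 0) (t₀ : ℝ) (ht₀ : t₀ ∈ Set.Ioo a b)
    (hpos : 0 < g.eval t₀) : ∀ t ∈ Set.Ioo a b, 0 < g.eval t := by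
  intro t ht
  by_contra hle
  push_neg at hle
  have hlt : g.eval t < 0 := lt_of_le_of_ne hle (h t ht)
  have hc : ContinuousOn (fun s => g.eval s) (Set.uIcc t t₀) :=
    (g.continuous_aeval).continuousOn
  have := intermediate_value_uIcc hc
  have h0 : (0 : ℝ) ∈ Set.uIcc (g.eval t) (g.eval t₀) := by
    rw [Set.mem_uIcc]; left; exact ⟨hlt.le, hpos.le⟩
  obtain ⟨c, hc1, hc2⟩ := this h0
  have hcmem : c ∈ Set.Ioo a b := Set.ordConnected_Ioo.uIcc_subset ht ht₀ hc1
  exact h c hcmem hc2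

private lemma TK_key (f : Polynomial ℝ) (n : ℕ) (hn : Even n)
    (a b : ℝ) (hab : a < b)
    (hpos : ∀ t ∈ Set.Ioo a b,
      0 < ((fun q : Polynomial ℝ => Polynomial.derivative q)^[n + 1] f).eval t)
    (x : ℝ) :
    (∑ i ∈ Finset.range (n + 1),
        ((fun q : Polynomial ℝ => Polynomial.derivative q)^[i] f).eval a
          * (x - a) ^ i / (Nat.factorial i : ℝ))
      ≠ (∑ i ∈ Finset.range (n + 1),
        ((fun q : Polynomial ℝ => Polynomial.derivative q)^[i] f).eval b
          * (x - b) ^ i / (Nat.factorial i : ℝ)) := by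
  intro heq
  set g : ℝ → ℝ := fun s => ∑ i ∈ Finset.range (n + 1),
        ((fun q : Polynomial ℝ => Polynomial.derivative q)^[i] f).eval s
          * (x - s) ^ i / (Nat.factorial i : ℝ) with hg
  have hG : ∀ t : ℝ, HasDerivAt g
      (((fun q : Polynomial ℝ => Polynomial.derivative q)^[n + 1] f).eval t
        * (x - t) ^ n / (Nat.factorial n : ℝ)) t := fun t => TK_hasDerivAt f x n t
  have hmono : MonotoneOn g (Set.Icc a b) := by
    apply monotoneOn_of_deriv_nonneg (convex_Icc a b)
    · exact fun t _ => (hG t).continuousAt.continuousWithinAt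
    · intro t _
      exact ((hG t).differentiableAt).differentiableWithinAt
    · intro t ht
      rw [interior_Icc] at ht
      rw [(hG t).deriv]
      apply div_nonneg _ (by positivity)
      exact mul_nonneg (hpos t ht).le (hn.pow_nonneg _)
  have hconst : ∀ t ∈ Set.Icc a b, g t = g a := by
    intro t ht
    have h1 : g a ≤ g t := hmono (Set.left_mem_Icc.2 hab.le) ht ht.1
    have h2 : g t ≤ g b := hmono ht (Set.right_mem_Icc.2 hab.le) ht.2
    have : g b = g a := heq.symm
    linarith
  -- pick t₀ ∈ (a,b), t₀ ≠ x
  obtain ⟨t₀, ht₀, htx⟩ : ∃ t₀, t₀ ∈ Set.Ioo a b ∧ t₀ ≠ x := by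
    by_cases hx : x = (a + b) / 2
    · exact ⟨(a + (a + b) / 2) / 2, ⟨by linarith, by linarith⟩, by rw [hx]; intro h; linarith⟩
    · exact ⟨(a + b) / 2, ⟨by linarith, by linarith⟩, fun h => hx h.symm⟩
  have hzero : HasDerivAt g 0 t₀ := by
    refine (hasDerivAt_const t₀ (g a)).congr_of_eventuallyEq ?_
    filter_upwards [isOpen_Ioo.mem_nhds ht₀] with s hs
    exact hconst s (Set.Ioo_subset_Icc_self hs)
  have := (hG t₀).unique hzero
  have h1 : ((fun q : Polynomial ℝ => Polynomial.derivative q)^[n + 1] f).eval t₀ ≠ 0 :=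
    (hpos t₀ ht₀).ne'
  have h2 : (x - t₀) ^ n ≠ 0 := pow_ne_zero _ (sub_ne_zero.2 (Ne.symm htx))
  have h3 : (Nat.factorial n : ℝ) ≠ 0 := by positivity
  exact (div_ne_zero (mul_ne_zero h1 h2) h3) this

private lemma TK_iter_neg (f : Polynomial ℝ) (i : ℕ) :
    (fun q : Polynomial ℝ => Polynomial.derivative q)^[i] (-f)
      = -((fun q : Polynomial ℝ => Polynomial.derivative q)^[i] f) := by
  induction i with
  | zero => simp
  | succ i ih => simp [Function.iterate_succ_apply', ih]

/-- (Tait–Kneser variant)  Let `f` be a real polynomial and `n` an even integer with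
`n < deg f`.  For `t` real, let `g_t(x) = ∑_{i=0}^n f^{(i)}(t)(x-t)^i / i!` be the `n`-th
osculating polynomial of `f` at `t`.  If `f^{(n+1)}(t) ≠ 0` for all `t ∈ (a,b)`, then the
graphs of `g_a` and `g_b` do not intersect in `ℝ²`: `g_a(x) ≠ g_b(x)` for all real `x`. -/
theorem stmt_16 (f : Polynomial ℝ) (n : ℕ) (hn : Even n) (hdeg : n < f.natDegree)
    (a b : ℝ) (hab : a < b)
    (hf : ∀ t ∈ Set.Ioo a b,
      ((fun q : Polynomial ℝ => Polynomial.derivative q)^[n + 1] f).eval t ≠ 0) :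
    ∀ x : ℝ,
      (∑ i ∈ Finset.range (n + 1),
        ((fun q : Polynomial ℝ => Polynomial.derivative q)^[i] f).eval a
          * (x - a) ^ i / (Nat.factorial i : ℝ))
      ≠ (∑ i ∈ Finset.range (n + 1),
        ((fun q : Polynomial ℝ => Polynomial.derivative q)^[i] f).eval b
          * (x - b) ^ i / (Nat.factorial i : ℝ)) := by
  intro x
  set P := (fun q : Polynomial ℝ => Polynomial.derivative q)^[n + 1] f with hP
  have hmid : (a + b) / 2 ∈ Set.Ioo a b := ⟨by linarith, by linarith⟩
  rcases (hf _ hmid).lt_or_gt with hneg | hpos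
  · -- P negative on the interval; apply key to -f
    have hposneg : ∀ t ∈ Set.Ioo a b,
        0 < ((fun q : Polynomial ℝ => Polynomial.derivative q)^[n + 1] (-f)).eval t := by
      have h0 : 0 < ((fun q : Polynomial ℝ => Polynomial.derivative q)^[n + 1] (-f)).eval
          ((a + b) / 2) := by
        rw [TK_iter_neg]; simpa [hP] using hneg
      apply TK_sign _ a b _ _ hmid h0
      intro t ht
      rw [TK_iter_neg]
      simpa [hP] using hf t ht
    have hkey := TK_key (-f) n hn a b hab hposneg x
    intro heq
    apply hkey
    simp only [TK_iter_neg, Polynomial.eval_neg, neg_mul, neg_div]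
    rw [Finset.sum_neg_distrib, Finset.sum_neg_distrib, heq]
  · have hposall : ∀ t ∈ Set.Ioo a b, 0 < P.eval t :=
      TK_sign P a b hf _ hmid hpos
    exact TK_key f n hn a b hab hposall x
end
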